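/- arXiv:2107.10148 — 2 statements merged into one kernel-verified Lean document; each statement's English description precedes it below -/
import Mathlib

section
/- In the two-group factor-model setup, suppose α₁ > α₂ and p₁(n)/p₂(n) → C for some C ∈ [0, ∞). Then a_{1,p₁(n)} / a_{2,p₂(n)} → 0 and, for every x > 0, P(Q_{p₁(n), p₂(n)} ≤ a_{2,p₂(n)} x) → Ψ_{α₂}(x) as n → ∞. (Proposition 2, Case 3, first subcase.) -/
open MeasureTheory ProbabilityTheory Filter

noncomputable section

/-- The Fréchet distribution function with tail index `α`. -/
def frechetCDF (α x : ℝ) : ℝ := if 0 < x then Real.exp (-x ^ (-α)) else 0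

/-- The norming constant `a_p = (Σ_{i<p} σ_i^α)^{1/α}`. -/
def normConst (σ : ℕ → ℝ) (α : ℝ) (p : ℕ) : ℝ :=
  (∑ i ∈ Finset.range p, σ i ^ α) ^ (1 / α)

/-- Maximum of the first `p₁` variables of the first group and the first `p₂`
variables of the second group. -/
def Qmax {Ω : Type*} (X₁ X₂ : ℕ → Ω → ℝ) (p₁ p₂ : ℕ) (ω : Ω) : ℝ :=
  max (⨆ i : Fin p₁, X₁ i ω) (⨆ j : Fin p₂, X₂ j ω)

/-- Codomains of the family consisting of the factor `Z` and the two noise arrays. -/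
def mixCodom (d : ℕ) : Unit ⊕ ℕ ⊕ ℕ → Type
  | Sum.inl _ => Fin d → ℝ
  | Sum.inr _ => ℝ

instance mixCodomMeasurableSpace (d : ℕ) : ∀ i, MeasurableSpace (mixCodom d i)
  | Sum.inl _ => inferInstanceAs (MeasurableSpace (Fin d → ℝ))
  | Sum.inr (Sum.inl _) => inferInstanceAs (MeasurableSpace ℝ)
  | Sum.inr (Sum.inr _) => inferInstanceAs (MeasurableSpace ℝ)

/-- The family consisting of the factor `Z` and the two noise arrays. -/
def mixFun {Ω : Type*} {d : ℕ} (Z : Ω → Fin d → ℝ) (ε₁ ε₂ : ℕ → Ω → ℝ) :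
    ∀ i : Unit ⊕ ℕ ⊕ ℕ, Ω → mixCodom d i
  | Sum.inl _ => Z
  | Sum.inr (Sum.inl i) => ε₁ i
  | Sum.inr (Sum.inr j) => ε₂ j

/-- basic bounds for normConst -/
lemma normConst_le {σ : ℕ → ℝ} {α C₁ C₂ : ℝ} (hα : 0 < α) (hC₁ : 0 < C₁)
    (hσ : ∀ i, σ i ∈ Set.Icc C₁ C₂) (p : ℕ) :
    C₁ * (p : ℝ) ^ (1/α) ≤ normConst σ α p ∧ normConst σ α p ≤ C₂ * (p : ℝ) ^ (1/α) := by
  have hC₂ : 0 < C₂ := lt_of_lt_of_le hC₁ (le_trans (hσ 0).1 (hσ 0).2)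
  have hsum₁ : (p : ℝ) * C₁ ^ α ≤ ∑ i ∈ Finset.range p, σ i ^ α := by
    calc (p : ℝ) * C₁ ^ α = ∑ _i ∈ Finset.range p, C₁ ^ α := by
          simp [Finset.sum_const, mul_comm]
      _ ≤ ∑ i ∈ Finset.range p, σ i ^ α :=
          Finset.sum_le_sum fun i _ => Real.rpow_le_rpow hC₁.le (hσ i).1 hα.le
  have hsum₂ : ∑ i ∈ Finset.range p, σ i ^ α ≤ (p : ℝ) * C₂ ^ α := by
    calc ∑ i ∈ Finset.range p, σ i ^ α ≤ ∑ _i ∈ Finset.range p, C₂ ^ α :=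
          Finset.sum_le_sum fun i _ => Real.rpow_le_rpow
            (le_trans hC₁.le (hσ i).1) (hσ i).2 hα.le
      _ = (p : ℝ) * C₂ ^ α := by simp [Finset.sum_const, mul_comm]
  have h1α : 0 < 1/α := by positivity
  have key : ∀ C : ℝ, 0 < C → ((p : ℝ) * C ^ α) ^ (1/α) = C * (p : ℝ) ^ (1/α) := by
    intro C hC
    rw [Real.mul_rpow (by positivity) (by positivity), ← Real.rpow_mul hC.le,
      mul_one_div, div_self hα.ne', Real.rpow_one, mul_comm]
  constructor
  · rw [← key C₁ hC₁]
    exact Real.rpow_le_rpow (by positivity) hsum₁ h1α.le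
  · rw [← key C₂ hC₂]
    exact Real.rpow_le_rpow (Finset.sum_nonneg fun i _ => Real.rpow_nonneg
      (le_trans hC₁.le (hσ i).1) α) hsum₂ h1α.le

lemma normConst_rpow {σ : ℕ → ℝ} {α C₁ C₂ : ℝ} (hα : 0 < α) (hC₁ : 0 < C₁)
    (hσ : ∀ i, σ i ∈ Set.Icc C₁ C₂) (p : ℕ) :
    normConst σ α p ^ α = ∑ i ∈ Finset.range p, σ i ^ α := by
  have hs : (0:ℝ) ≤ ∑ i ∈ Finset.range p, σ i ^ α :=
    Finset.sum_nonneg fun i _ => Real.rpow_nonneg (le_trans hC₁.le (hσ i).1) α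
  rw [normConst, ← Real.rpow_mul hs, one_div, inv_mul_cancel₀ hα.ne', Real.rpow_one]

lemma one_sub_ge_exp (u : ℝ) (h0 : 0 ≤ u) (h2 : u ≤ 1/2) :
    Real.exp (-(u + 2*u^2)) ≤ 1 - u := by
  rw [Real.exp_neg, inv_le_iff_one_le_mul₀ (Real.exp_pos _)]
  nlinarith [Real.add_one_le_exp (u + 2*u^2)]

lemma one_sub_le_exp (u : ℝ) : 1 - u ≤ Real.exp (-u) := by
  have := Real.add_one_le_exp (-u); linarith

lemma exp_le_one_add (t : ℝ) (h0 : 0 ≤ t) (h2 : t ≤ 1/2) :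
    Real.exp t ≤ 1 + 2*t := by
  have h1 : Real.exp (-t) ≥ 1 - t := one_sub_le_exp t
  have h3 : Real.exp t * Real.exp (-t) = 1 := by rw [← Real.exp_add]; simp
  nlinarith [Real.exp_pos t, Real.exp_pos (-t)]

lemma tail_bound {T : ℝ → ℝ} {α : ℝ}
    (h : Tendsto (fun s => s ^ α * T s) atTop (nhds 1)) {δ : ℝ} (hδ : 0 < δ) :
    ∃ x₀ : ℝ, 0 < x₀ ∧ ∀ s, x₀ ≤ s →
      (1-δ) * s ^ (-α) ≤ T s ∧ T s ≤ (1+δ) * s ^ (-α) := by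
  have h1 : ∀ᶠ s in atTop, |s ^ α * T s - 1| < δ := by
    have := Metric.tendsto_nhds.mp h δ hδ
    simpa [Real.dist_eq] using this
  rcases (h1.and (eventually_ge_atTop (1:ℝ))).exists_forall_of_atTop with ⟨x₀', hx₀'⟩
  refine ⟨max x₀' 1, by positivity, fun s hs => ?_⟩
  have hs1 : (1:ℝ) ≤ s := le_trans (le_max_right _ _) hs
  have hs0 : 0 < s := lt_of_lt_of_le one_pos hs1
  obtain ⟨habs, -⟩ := hx₀' s (le_trans (le_max_left _ _) hs)
  rw [abs_lt] at habs
  have hpow : (0:ℝ) < s ^ (-α) := Real.rpow_pos_of_pos hs0 _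
  have hmul : s ^ (-α) * s ^ α = 1 := by rw [← Real.rpow_add hs0]; simp
  have hTs : s ^ α * T s * s ^ (-α) = T s := by linear_combination T s * hmul
  constructor
  · calc (1-δ) * s ^ (-α) ≤ s ^ α * T s * s ^ (-α) :=
        mul_le_mul_of_nonneg_right (by linarith) hpow.le
      _ = T s := hTs
  · calc T s = s ^ α * T s * s ^ (-α) := hTs.symm
      _ ≤ (1+δ) * s ^ (-α) := mul_le_mul_of_nonneg_right (by linarith) hpow.le

/-- the identity ((A)/(σ))^(-α) = A^(-α) * σ^α for positives -/
lemma div_rpow_neg (A s α : ℝ) (hA : 0 < A) (hs : 0 < s) :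
    (A / s) ^ (-α) = A ^ (-α) * s ^ α := by
  rw [Real.div_rpow hA.le hs.le, Real.rpow_neg hs.le, div_eq_mul_inv, inv_inv]

set_option maxHeartbeats 1600000 in
lemma key_tendsto
    (α₁ α₂ x M C₁ C₂ : ℝ) (hα₂ : 0 < α₂) (hα₁ : 0 < α₁) (hx : 0 < x) (hM : 0 ≤ M)
    (hC₁ : 0 < C₁) (hC₁₂ : C₁ ≤ C₂)
    (σ σt φ ψ : ℕ → ℝ) (hσ : ∀ i, σ i ∈ Set.Icc C₁ C₂) (hσt : ∀ j, σt j ∈ Set.Icc C₁ C₂)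
    (hφ : ∀ i, |φ i| ≤ M) (hψ : ∀ j, |ψ j| ≤ M)
    (T₁ T₂ : ℝ → ℝ) (hT₁01 : ∀ s, T₁ s ∈ Set.Icc (0:ℝ) 1) (hT₂01 : ∀ s, T₂ s ∈ Set.Icc (0:ℝ) 1)
    (htail₁ : Tendsto (fun s => s ^ α₁ * T₁ s) atTop (nhds 1))
    (htail₂ : Tendsto (fun s => s ^ α₂ * T₂ s) atTop (nhds 1))
    (p₁ p₂ : ℕ → ℕ) (a : ℕ → ℝ) (ha_pos : ∀ n, 0 < a n) (ha : Tendsto a atTop atTop)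
    (hsum : ∀ n, ∑ j ∈ Finset.range (p₂ n), σt j ^ α₂ = a n ^ α₂)
    (hnegl : Tendsto (fun n => (p₁ n : ℝ) * a n ^ (-α₁)) atTop (nhds 0)) :
    Tendsto (fun n => (∏ i ∈ Finset.range (p₁ n), (1 - T₁ ((a n * x - φ i)/σ i))) *
                      (∏ j ∈ Finset.range (p₂ n), (1 - T₂ ((a n * x - ψ j)/σt j))))
      atTop (nhds (Real.exp (-x ^ (-α₂)))) := by
  have hC₂ : 0 < C₂ := lt_of_lt_of_le hC₁ hC₁₂
  set L : ℝ := x ^ (-α₂) with hLdef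
  have hL : 0 ≤ L := Real.rpow_nonneg hx.le _
  have main : ∀ δ : ℝ, 0 < δ → δ ≤ 1/2 → δ * (L+1) ≤ 1/2 →
      ∀ᶠ n in atTop,
        |(∏ i ∈ Finset.range (p₁ n), (1 - T₁ ((a n * x - φ i)/σ i))) *
         (∏ j ∈ Finset.range (p₂ n), (1 - T₂ ((a n * x - ψ j)/σt j))) - Real.exp (-L)|
          ≤ δ * (3*L+5) := by
    intro δ hδ hδ2 hδ3
    obtain ⟨x₁, hx₁pos, hx₁⟩ := tail_bound htail₁ hδ
    obtain ⟨x₂, hx₂pos, hx₂⟩ := tail_bound htail₂ hδ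
    set b : ℕ → ℝ := fun n => (a n * x - M)/C₂ with hbdef
    have hb : Tendsto b atTop atTop := by
      apply Tendsto.atTop_div_const hC₂
      simpa [sub_eq_add_neg] using
        tendsto_atTop_add_const_right atTop (-M) (ha.atTop_mul_const hx)
    set mb : ℕ → ℝ := fun n => (1+δ) * (b n ^ (-α₁) + b n ^ (-α₂)) with hmbdef
    have hmb : Tendsto mb atTop (nhds 0) := by
      have h1 : Tendsto (fun n => b n ^ (-α₁) + b n ^ (-α₂)) atTop (nhds (0 + 0)) :=
        ((tendsto_rpow_neg_atTop hα₁).comp hb).add ((tendsto_rpow_neg_atTop hα₂).comp hb)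
      have := h1.const_mul (1+δ)
      simpa using this
    have hPb : Tendsto (fun n => (p₁ n : ℝ) * b n ^ (-α₁)) atTop (nhds 0) := by
      have hc : (0:ℝ) < x / (2*C₂) := by positivity
      apply squeeze_zero' (g := fun n => (x/(2*C₂)) ^ (-α₁) * ((p₁ n : ℝ) * a n ^ (-α₁)))
      · filter_upwards [hb.eventually_ge_atTop 1] with n hbn
        have : (0:ℝ) < b n := lt_of_lt_of_le one_pos hbn
        have := (hT₁01 0).1
        positivity
      · filter_upwards [ha.eventually_ge_atTop (2*M/x), ha.eventually_ge_atTop 1] with n hn hn1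
        have han : (0:ℝ) < a n := lt_of_lt_of_le one_pos hn1
        have h1 : a n * (x/(2*C₂)) ≤ b n := by
          rw [hbdef]
          simp only
          rw [le_div_iff₀ hC₂]
          have h2M : 2*M ≤ a n * x := by rw [div_le_iff₀ hx] at hn; linarith
          have h : a n * (x/(2*C₂)) * C₂ = a n * x / 2 := by field_simp
          rw [h]; linarith
        have h2 : b n ^ (-α₁) ≤ (a n * (x/(2*C₂))) ^ (-α₁) :=
          Real.rpow_le_rpow_of_nonpos (by positivity) h1 (by linarith)
        have h3 : (a n * (x/(2*C₂))) ^ (-α₁) = (x/(2*C₂)) ^ (-α₁) * a n ^ (-α₁) := by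
          rw [Real.mul_rpow han.le hc.le]; ring
        calc (p₁ n : ℝ) * b n ^ (-α₁) ≤ (p₁ n : ℝ) * (a n * (x/(2*C₂))) ^ (-α₁) :=
              mul_le_mul_of_nonneg_left h2 (Nat.cast_nonneg _)
          _ = (x/(2*C₂)) ^ (-α₁) * ((p₁ n : ℝ) * a n ^ (-α₁)) := by rw [h3]; ring
      · simpa using hnegl.const_mul ((x/(2*C₂)) ^ (-α₁))
    have hdiv : Tendsto (fun n => (a n * x - M)/a n) atTop (nhds x) := by
      have h1 : Tendsto (fun n => (a n)⁻¹) atTop (nhds 0) := ha.inv_tendsto_atTop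
      have h2 : Tendsto (fun n => x - M * (a n)⁻¹) atTop (nhds (x - M * 0)) :=
        tendsto_const_nhds.sub (h1.const_mul M)
      have heq : ∀ᶠ n in atTop, x - M * (a n)⁻¹ = (a n * x - M)/a n := by
        filter_upwards [ha.eventually_ge_atTop 1] with n hn
        have han : a n ≠ 0 := by positivity
        field_simp
      have h2' : Tendsto (fun n => x - M * (a n)⁻¹) atTop (nhds x) := by simpa using h2
      exact Tendsto.congr' heq h2'
    have hdiv' : Tendsto (fun n => (a n * x + M)/a n) atTop (nhds x) := by
      have h1 : Tendsto (fun n => (a n)⁻¹) atTop (nhds 0) := ha.inv_tendsto_atTop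
      have h2 : Tendsto (fun n => x + M * (a n)⁻¹) atTop (nhds (x + M * 0)) :=
        tendsto_const_nhds.add (h1.const_mul M)
      have heq : ∀ᶠ n in atTop, x + M * (a n)⁻¹ = (a n * x + M)/a n := by
        filter_upwards [ha.eventually_ge_atTop 1] with n hn
        have han : a n ≠ 0 := by positivity
        field_simp
      have h2' : Tendsto (fun n => x + M * (a n)⁻¹) atTop (nhds x) := by simpa using h2
      exact Tendsto.congr' heq h2'
    have hq' : Tendsto (fun n => ((a n * x - M)/a n) ^ (-α₂)) atTop (nhds L) :=
      hdiv.rpow_const (Or.inl hx.ne')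
    have hq : Tendsto (fun n => ((a n * x + M)/a n) ^ (-α₂)) atTop (nhds L) :=
      hdiv'.rpow_const (Or.inl hx.ne')
    filter_upwards [hb.eventually_ge_atTop x₁, hb.eventually_ge_atTop x₂,
      hb.eventually_ge_atTop 1, hmb.eventually_lt_const (show (0:ℝ) < δ/2 by positivity),
      hPb.eventually_lt_const hδ, hq'.eventually_lt_const (lt_add_of_pos_right L hδ),
      hq.eventually_const_lt (sub_lt_self L hδ)] with n hbx₁ hbx₂ hb1 hmbn hPbn hq'n hqn
    -- per-n notation
    set A : ℝ := a n * x with hAdef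
    have han : 0 < a n := ha_pos n
    have hbpos : 0 < b n := lt_of_lt_of_le one_pos hb1
    have hAM : C₂ ≤ A - M := by
      have := (one_le_div hC₂).mp hb1
      linarith
    have hAMpos : 0 < A - M := lt_of_lt_of_le hC₂ hAM
    have hAMpos' : 0 < A + M := by linarith
    have hmb0 : 0 ≤ mb n := by
      have h1 : (0:ℝ) ≤ b n ^ (-α₁) := Real.rpow_nonneg hbpos.le _
      have h2 : (0:ℝ) ≤ b n ^ (-α₂) := Real.rpow_nonneg hbpos.le _
      rw [hmbdef]; positivity
    -- group 1 per-index facts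
    have hg1 : ∀ i : ℕ, b n ≤ (A - φ i)/σ i ∧
        T₁ ((A - φ i)/σ i) ≤ mb n := by
      intro i
      have hσi := hσ i
      have hσipos : 0 < σ i := lt_of_lt_of_le hC₁ hσi.1
      have hφi := abs_le.mp (hφ i)
      have hge : b n ≤ (A - φ i)/σ i := by
        rw [hbdef]; simp only
        gcongr <;> first | exact hσipos | exact hσi.2 | linarith [hφi.2]
      refine ⟨hge, ?_⟩
      have hT := (hx₁ _ (le_trans hbx₁ hge)).2
      have hr : ((A - φ i)/σ i) ^ (-α₁) ≤ b n ^ (-α₁) :=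
        Real.rpow_le_rpow_of_nonpos hbpos hge (by linarith)
      have h1 : (0:ℝ) ≤ b n ^ (-α₂) := Real.rpow_nonneg hbpos.le _
      calc T₁ ((A - φ i)/σ i) ≤ (1+δ) * ((A - φ i)/σ i) ^ (-α₁) := hT
        _ ≤ (1+δ) * b n ^ (-α₁) := mul_le_mul_of_nonneg_left hr (by linarith)
        _ ≤ mb n := by
            rw [hmbdef]
            exact mul_le_mul_of_nonneg_left (le_add_of_nonneg_right h1) (by linarith)
    -- group 2 per-index facts
    have hg2 : ∀ j : ℕ, b n ≤ (A - ψ j)/σt j ∧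
        T₂ ((A - ψ j)/σt j) ≤ mb n ∧
        T₂ ((A - ψ j)/σt j) ≤ (1+δ) * (σt j ^ α₂ * (A - M) ^ (-α₂)) ∧
        (1-δ) * (σt j ^ α₂ * (A + M) ^ (-α₂)) ≤ T₂ ((A - ψ j)/σt j) := by
      intro j
      have hσj := hσt j
      have hσjpos : 0 < σt j := lt_of_lt_of_le hC₁ hσj.1
      have hψj := abs_le.mp (hψ j)
      have hnum : 0 < A - ψ j := by linarith
      have hge : b n ≤ (A - ψ j)/σt j := by
        rw [hbdef]; simp only
        gcongr <;> first | exact hσjpos | exact hσj.2 | linarith [hψj.2]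
      have hT := hx₂ _ (le_trans hbx₂ hge)
      have hid : ((A - ψ j)/σt j) ^ (-α₂) = (A - ψ j) ^ (-α₂) * σt j ^ α₂ :=
        div_rpow_neg _ _ _ hnum hσjpos
      have hσjp : (0:ℝ) < σt j ^ α₂ := Real.rpow_pos_of_pos hσjpos _
      refine ⟨hge, ?_, ?_, ?_⟩
      · have hr : ((A - ψ j)/σt j) ^ (-α₂) ≤ b n ^ (-α₂) :=
          Real.rpow_le_rpow_of_nonpos hbpos hge (by linarith)
        have h1 : (0:ℝ) ≤ b n ^ (-α₁) := Real.rpow_nonneg hbpos.le _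
        calc T₂ ((A - ψ j)/σt j) ≤ (1+δ) * ((A - ψ j)/σt j) ^ (-α₂) := hT.2
          _ ≤ (1+δ) * b n ^ (-α₂) := mul_le_mul_of_nonneg_left hr (by linarith)
          _ ≤ mb n := by
              rw [hmbdef]
              exact mul_le_mul_of_nonneg_left (le_add_of_nonneg_left h1) (by linarith)
      · have hr : (A - ψ j) ^ (-α₂) ≤ (A - M) ^ (-α₂) :=
          Real.rpow_le_rpow_of_nonpos hAMpos (by linarith) (by linarith)
        calc T₂ ((A - ψ j)/σt j) ≤ (1+δ) * ((A - ψ j)/σt j) ^ (-α₂) := hT.2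
          _ = (1+δ) * ((A - ψ j) ^ (-α₂) * σt j ^ α₂) := by rw [hid]
          _ ≤ (1+δ) * (σt j ^ α₂ * (A - M) ^ (-α₂)) := by
              apply mul_le_mul_of_nonneg_left _ (by linarith : (0:ℝ) ≤ 1+δ)
              rw [mul_comm]
              exact mul_le_mul_of_nonneg_left hr hσjp.le
      · have hr : (A + M) ^ (-α₂) ≤ (A - ψ j) ^ (-α₂) :=
          Real.rpow_le_rpow_of_nonpos hnum (by linarith) (by linarith)
        calc (1-δ) * (σt j ^ α₂ * (A + M) ^ (-α₂))
            ≤ (1-δ) * ((A - ψ j) ^ (-α₂) * σt j ^ α₂) := by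
              apply mul_le_mul_of_nonneg_left _ (by linarith : (0:ℝ) ≤ 1-δ)
              rw [mul_comm (σt j ^ α₂)]
              exact mul_le_mul_of_nonneg_right hr hσjp.le
          _ = (1-δ) * ((A - ψ j)/σt j) ^ (-α₂) := by rw [hid]
          _ ≤ T₂ ((A - ψ j)/σt j) := hT.1
    -- sums
    set S₁ : ℝ := ∑ i ∈ Finset.range (p₁ n), T₁ ((A - φ i)/σ i) with hS₁def
    set S₂ : ℝ := ∑ j ∈ Finset.range (p₂ n), T₂ ((A - ψ j)/σt j) with hS₂def
    have hS₁0 : 0 ≤ S₁ := Finset.sum_nonneg fun i _ => (hT₁01 _).1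
    have hS₁u : S₁ ≤ (1+δ) * δ := by
      have h1 : S₁ ≤ ∑ i ∈ Finset.range (p₁ n), (1+δ) * b n ^ (-α₁) := by
        apply Finset.sum_le_sum
        intro i _
        have hσipos : 0 < σ i := lt_of_lt_of_le hC₁ (hσ i).1
        have hge := (hg1 i).1
        have hT := (hx₁ _ (le_trans hbx₁ hge)).2
        have hr : ((A - φ i)/σ i) ^ (-α₁) ≤ b n ^ (-α₁) :=
          Real.rpow_le_rpow_of_nonpos hbpos hge (by linarith)
        exact le_trans hT (mul_le_mul_of_nonneg_left hr (by linarith))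
      rw [Finset.sum_const, Finset.card_range, nsmul_eq_mul] at h1
      have h2 : (p₁ n : ℝ) * b n ^ (-α₁) ≤ δ := hPbn.le
      have h3 : (0:ℝ) ≤ (p₁ n : ℝ) * b n ^ (-α₁) := by
        have : (0:ℝ) ≤ b n ^ (-α₁) := Real.rpow_nonneg hbpos.le _
        positivity
      calc S₁ ≤ (p₁ n : ℝ) * ((1+δ) * b n ^ (-α₁)) := h1
        _ = (1+δ) * ((p₁ n : ℝ) * b n ^ (-α₁)) := by ring
        _ ≤ (1+δ) * δ := mul_le_mul_of_nonneg_left h2 (by linarith)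
    have hsum_id : ∀ B : ℝ, 0 < B →
        ∑ j ∈ Finset.range (p₂ n), σt j ^ α₂ * B ^ (-α₂) = (B / a n) ^ (-α₂) := by
      intro B hB
      rw [← Finset.sum_mul, hsum n, div_rpow_neg _ _ _ hB han, mul_comm]
    have hS₂u : S₂ ≤ (1+δ) * (L + δ) := by
      have h1 : S₂ ≤ ∑ j ∈ Finset.range (p₂ n), (1+δ) * (σt j ^ α₂ * (A - M) ^ (-α₂)) :=
        Finset.sum_le_sum fun j _ => (hg2 j).2.2.1
      rw [← Finset.mul_sum, hsum_id _ hAMpos] at h1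
      have h2 : ((A - M)/a n) ^ (-α₂) ≤ L + δ := hq'n.le
      calc S₂ ≤ (1+δ) * (((A - M)/a n) ^ (-α₂)) := h1
        _ ≤ (1+δ) * (L + δ) := mul_le_mul_of_nonneg_left h2 (by linarith)
    have hS₂l : (1-δ) * (L - δ) ≤ S₂ := by
      have h1 : ∑ j ∈ Finset.range (p₂ n), (1-δ) * (σt j ^ α₂ * (A + M) ^ (-α₂)) ≤ S₂ :=
        Finset.sum_le_sum fun j _ => (hg2 j).2.2.2
      rw [← Finset.mul_sum, hsum_id _ hAMpos'] at h1
      have h2 : L - δ ≤ ((A + M)/a n) ^ (-α₂) := hqn.le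
      exact le_trans (mul_le_mul_of_nonneg_left h2 (by linarith : (0:ℝ) ≤ 1-δ)) h1
    -- products
    set P₁ : ℝ := ∏ i ∈ Finset.range (p₁ n), (1 - T₁ ((A - φ i)/σ i)) with hP₁def
    set P₂ : ℝ := ∏ j ∈ Finset.range (p₂ n), (1 - T₂ ((A - ψ j)/σt j)) with hP₂def
    have hmb12 : mb n ≤ δ/2 := hmbn.le
    have hδ4 : δ/2 ≤ 1/4 := by linarith
    have hP₁0 : 0 ≤ P₁ := Finset.prod_nonneg fun i _ => by
      have := (hT₁01 ((A - φ i)/σ i)).2; linarith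
    have hP₂0 : 0 ≤ P₂ := Finset.prod_nonneg fun j _ => by
      have := (hT₂01 ((A - ψ j)/σt j)).2; linarith
    have hP₁1 : P₁ ≤ 1 := Finset.prod_le_one
      (fun i _ => by have := (hT₁01 ((A - φ i)/σ i)).2; linarith)
      (fun i _ => by have := (hT₁01 ((A - φ i)/σ i)).1; linarith)
    have hP₂u : P₂ ≤ Real.exp (-S₂) := by
      have h1 : P₂ ≤ ∏ j ∈ Finset.range (p₂ n), Real.exp (-(T₂ ((A - ψ j)/σt j))) := by
        apply Finset.prod_le_prod
        · intro j _; have := (hT₂01 ((A - ψ j)/σt j)).2; linarith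
        · intro j _; exact one_sub_le_exp _
      have h2 : (∏ j ∈ Finset.range (p₂ n), Real.exp (-(T₂ ((A - ψ j)/σt j)))) =
          Real.exp (-S₂) := by
        rw [← Real.exp_sum]
        congr 1
        rw [hS₂def, ← Finset.sum_neg_distrib]
      rwa [h2] at h1
    have hlow : ∀ (m : ℕ) (T : ℝ → ℝ) (c : ℕ → ℝ), (∀ s, T s ∈ Set.Icc (0:ℝ) 1) →
        (∀ k, T (c k) ≤ mb n) →
        Real.exp (-(1+δ) * ∑ k ∈ Finset.range m, T (c k)) ≤
          ∏ k ∈ Finset.range m, (1 - T (c k)) := by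
      intro m T c hT01 hTm
      have h1 : ∀ k ∈ Finset.range m,
          Real.exp (-(1+δ) * T (c k)) ≤ 1 - T (c k) := by
        intro k _
        have h0 := (hT01 (c k)).1
        have hm := hTm k
        have hu2 : T (c k) ≤ 1/2 := by linarith
        calc Real.exp (-(1+δ) * T (c k)) ≤ Real.exp (-(T (c k) + 2*(T (c k))^2)) := by
              apply Real.exp_le_exp.mpr
              have h5 : T (c k) * T (c k) ≤ (δ/2) * T (c k) :=
                mul_le_mul_of_nonneg_right (le_trans hm hmb12) h0
              linarith
          _ ≤ 1 - T (c k) := one_sub_ge_exp _ h0 hu2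
      calc Real.exp (-(1+δ) * ∑ k ∈ Finset.range m, T (c k))
          = ∏ k ∈ Finset.range m, Real.exp (-(1+δ) * T (c k)) := by
            rw [← Real.exp_sum, ← Finset.mul_sum]
        _ ≤ ∏ k ∈ Finset.range m, (1 - T (c k)) :=
            Finset.prod_le_prod (fun k _ => (Real.exp_pos _).le) h1
    have hP₁l : Real.exp (-(1+δ) * S₁) ≤ P₁ :=
      hlow (p₁ n) T₁ (fun i => (A - φ i)/σ i) hT₁01 (fun i => (hg1 i).2)
    have hP₂l : Real.exp (-(1+δ) * S₂) ≤ P₂ :=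
      hlow (p₂ n) T₂ (fun j => (A - ψ j)/σt j) hT₂01 (fun j => (hg2 j).2.1)
    -- combine
    have hexpL1 : Real.exp (-L) ≤ 1 := Real.exp_le_one_iff.mpr (by linarith)
    have hup : P₁ * P₂ ≤ Real.exp (-L) + δ * (3*L+5) := by
      have e1 : P₁ * P₂ ≤ P₂ := mul_le_of_le_one_left hP₂0 hP₁1
      have e2 : Real.exp (-S₂) ≤ Real.exp (-((1-δ)*(L-δ))) :=
        Real.exp_le_exp.mpr (by linarith [hS₂l])
      set t : ℝ := δ*L + δ - δ^2 with htdef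
      have hδδ : δ*δ ≤ δ*1 := mul_le_mul_of_nonneg_left (le_trans hδ2 (by norm_num)) hδ.le
      have hδL : 0 ≤ δ*L := mul_nonneg hδ.le hL
      have ht0 : 0 ≤ t := by rw [htdef]; linarith [hδδ, hδL]
      have ht2 : t ≤ 1/2 := by rw [htdef]; linarith [hδ3, sq_nonneg δ, hδL]
      have e3 : Real.exp (-((1-δ)*(L-δ))) = Real.exp (-L) * Real.exp t := by
        rw [← Real.exp_add]; congr 1; rw [htdef]; ring
      have e4 : Real.exp t ≤ 1 + 2*t := exp_le_one_add t ht0 ht2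
      have e5a : Real.exp (-L) * Real.exp t ≤ Real.exp (-L) * (1 + 2*t) :=
        mul_le_mul_of_nonneg_left e4 (Real.exp_nonneg _)
      have e5b : Real.exp (-L) * (2*t) ≤ 1 * (2*t) :=
        mul_le_mul_of_nonneg_right hexpL1 (by linarith)
      have e5 : Real.exp (-L) * Real.exp t ≤ Real.exp (-L) + 2*t := by
        linarith [e5a, e5b]
      have e6 : 2*t ≤ δ * (3*L+5) := by
        rw [htdef]
        linarith [mul_nonneg hδ.le hL, sq_nonneg δ, hδ.le]
      calc P₁ * P₂ ≤ P₂ := e1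
        _ ≤ Real.exp (-S₂) := hP₂u
        _ ≤ Real.exp (-((1-δ)*(L-δ))) := e2
        _ = Real.exp (-L) * Real.exp t := e3
        _ ≤ Real.exp (-L) + 2*t := e5
        _ ≤ Real.exp (-L) + δ * (3*L+5) := by linarith
    have hlo : Real.exp (-L) - δ * (3*L+5) ≤ P₁ * P₂ := by
      have e1 : Real.exp (-(1+δ) * S₁) * Real.exp (-(1+δ) * S₂) ≤ P₁ * P₂ :=
        mul_le_mul hP₁l hP₂l (Real.exp_pos _).le hP₁0
      have e2 : Real.exp (-(1+δ) * S₁) * Real.exp (-(1+δ) * S₂) =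
          Real.exp (-((1+δ) * (S₁ + S₂))) := by
        rw [← Real.exp_add]; congr 1; ring
      have e3 : (1+δ) * (S₁ + S₂) ≤ L + δ * (3*L+5) := by
        have e3a : S₁ + S₂ ≤ (1+δ)*(L + 2*δ) := by
          have hr : (1+δ)*δ + (1+δ)*(L+δ) = (1+δ)*(L+2*δ) := by ring
          linarith [hS₁u, hS₂u]
        have e3b : (1+δ)*(S₁+S₂) ≤ (1+δ)*((1+δ)*(L+2*δ)) :=
          mul_le_mul_of_nonneg_left e3a (by linarith)
        have h1 : δ*δ ≤ δ*(1/2) := mul_le_mul_of_nonneg_left hδ2 hδ.le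
        have h2 : δ*δ*L ≤ δ*(1/2)*L := mul_le_mul_of_nonneg_right h1 hL
        have h3 : δ*(δ*δ) ≤ δ*(δ*(1/2)) := mul_le_mul_of_nonneg_left h1 hδ.le
        have h4 : 0 ≤ δ*L := mul_nonneg hδ.le hL
        have e3c : (1+δ)*((1+δ)*(L+2*δ)) ≤ L + δ * (3*L+5) := by
          linarith [h1, h2, h3, h4]
        exact le_trans e3b e3c
      have e4 : Real.exp (-(L + δ * (3*L+5))) ≤ Real.exp (-((1+δ) * (S₁ + S₂))) :=
        Real.exp_le_exp.mpr (by linarith)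
      have e5 : Real.exp (-L) * Real.exp (-(δ * (3*L+5))) = Real.exp (-(L + δ * (3*L+5))) := by
        rw [← Real.exp_add]; congr 1; ring
      have e6 : 1 - δ * (3*L+5) ≤ Real.exp (-(δ * (3*L+5))) := one_sub_le_exp _
      have e7 : Real.exp (-L) - δ * (3*L+5) ≤ Real.exp (-L) * Real.exp (-(δ * (3*L+5))) := by
        have e7a : Real.exp (-L) * (1 - δ*(3*L+5)) ≤
            Real.exp (-L) * Real.exp (-(δ * (3*L+5))) :=
          mul_le_mul_of_nonneg_left e6 (Real.exp_nonneg _)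
        have e7b : (δ*(3*L+5)) * Real.exp (-L) ≤ (δ*(3*L+5)) * 1 :=
          mul_le_mul_of_nonneg_left hexpL1 (mul_nonneg hδ.le (by linarith))
        linarith [e7a, e7b]
      calc Real.exp (-L) - δ * (3*L+5) ≤ Real.exp (-L) * Real.exp (-(δ * (3*L+5))) := e7
        _ = Real.exp (-(L + δ * (3*L+5))) := e5
        _ ≤ Real.exp (-((1+δ) * (S₁ + S₂))) := e4
        _ = Real.exp (-(1+δ) * S₁) * Real.exp (-(1+δ) * S₂) := e2.symm
        _ ≤ P₁ * P₂ := e1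
    rw [abs_le]
    exact ⟨by linarith, by linarith⟩
  -- conclude from main
  rw [Metric.tendsto_atTop]
  intro ε hε
  have h35 : (0:ℝ) < 3*L+5 := by linarith
  set δ : ℝ := min (min (1/2) (1/(2*(L+1)))) (ε/(2*(3*L+5))) with hδdef
  have hδpos : 0 < δ := lt_min (lt_min (by norm_num) (by positivity)) (by positivity)
  have hδ2 : δ ≤ 1/2 := le_trans (min_le_left _ _) (min_le_left _ _)
  have hδ3 : δ * (L+1) ≤ 1/2 := by
    have h1 : δ ≤ 1/(2*(L+1)) := le_trans (min_le_left _ _) (min_le_right _ _)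
    have h2 : (0:ℝ) < L + 1 := by linarith
    calc δ * (L+1) ≤ (1/(2*(L+1))) * (L+1) := mul_le_mul_of_nonneg_right h1 h2.le
      _ = 1/2 := by
        field_simp
        try ring
  obtain ⟨N, hN⟩ := (main δ hδpos hδ2 hδ3).exists_forall_of_atTop
  refine ⟨N, fun n hn => ?_⟩
  have h1 := hN n hn
  have h2 : δ * (3*L+5) ≤ ε/2 := by
    have h3 : δ ≤ ε/(2*(3*L+5)) := min_le_right _ _
    calc δ * (3*L+5) ≤ (ε/(2*(3*L+5))) * (3*L+5) := mul_le_mul_of_nonneg_right h3 h35.le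
      _ = ε/2 := by field_simp
  rw [Real.dist_eq]
  exact lt_of_le_of_lt (le_trans h1 h2) (by linarith)

def embF (q₁ q₂ : ℕ) : Fin q₁ ⊕ Fin q₂ → Unit ⊕ ℕ ⊕ ℕ
  | Sum.inl i => Sum.inr (Sum.inl (i : ℕ))
  | Sum.inr j => Sum.inr (Sum.inr (j : ℕ))

def pickT {d q₁ q₂ : ℕ} (T : Finset (Unit ⊕ ℕ ⊕ ℕ))
    (hmem₁ : ∀ i : Fin q₁, (Sum.inr (Sum.inl (i : ℕ)) : Unit ⊕ ℕ ⊕ ℕ) ∈ T)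
    (hmem₂ : ∀ j : Fin q₂, (Sum.inr (Sum.inr (j : ℕ)) : Unit ⊕ ℕ ⊕ ℕ) ∈ T)
    (v : ∀ m : {m // m ∈ T}, mixCodom d m) : Fin q₁ ⊕ Fin q₂ → ℝ
  | Sum.inl i => v ⟨Sum.inr (Sum.inl (i : ℕ)), hmem₁ i⟩
  | Sum.inr j => v ⟨Sum.inr (Sum.inr (j : ℕ)), hmem₂ j⟩

lemma freeze {Ω : Type*} [MeasurableSpace Ω] (P : Measure Ω) [IsProbabilityMeasure P]
    (d : ℕ) (Z : Ω → Fin d → ℝ) (hZm : Measurable Z)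
    (ε₁ ε₂ : ℕ → Ω → ℝ) (hε₁m : ∀ i, Measurable (ε₁ i)) (hε₂m : ∀ j, Measurable (ε₂ j))
    (hindep : iIndepFun (m := fun i => mixCodomMeasurableSpace d i) (mixFun Z ε₁ ε₂) P)
    (q₁ q₂ : ℕ) (h₁ h₂ : ℕ → (Fin d → ℝ) → ℝ)
    (hh₁ : ∀ i, Measurable (h₁ i)) (hh₂ : ∀ j, Measurable (h₂ j)) :
    P {ω | (∀ i : Fin q₁, ε₁ i ω ≤ h₁ i (Z ω)) ∧ (∀ j : Fin q₂, ε₂ j ω ≤ h₂ j (Z ω))} =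
      ∫⁻ ω, (∏ i ∈ Finset.range q₁, P {ω' | ε₁ i ω' ≤ h₁ i (Z ω)}) *
            (∏ j ∈ Finset.range q₂, P {ω' | ε₂ j ω' ≤ h₂ j (Z ω)}) ∂P := by
  classical
  set Y : Fin q₁ ⊕ Fin q₂ → Ω → ℝ := Sum.elim (fun i => ε₁ i) (fun j => ε₂ j) with hYdef
  have hYm : ∀ k, Measurable (Y k) := by rintro (i | j); exacts [hε₁m i, hε₂m j]
  set W : Ω → (Fin q₁ ⊕ Fin q₂ → ℝ) := fun ω k => Y k ω with hWdef
  have hWm : Measurable W := measurable_pi_lambda _ hYm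
  set h : (Fin q₁ ⊕ Fin q₂) → (Fin d → ℝ) → ℝ :=
    Sum.elim (fun i => h₁ i) (fun j => h₂ j) with hhdef
  have hhm : ∀ k, Measurable (h k) := by rintro (i | j); exacts [hh₁ i, hh₂ j]
  have hembinj : Function.Injective (embF q₁ q₂) := by
    rintro (i | j) (i' | j') hkk <;> simp only [embF, Sum.inr.injEq, Sum.inl.injEq] at hkk
    · exact congrArg Sum.inl (Fin.ext hkk)
    · exact absurd hkk (by simp)
    · exact absurd hkk (by simp)
    · exact congrArg Sum.inr (Fin.ext hkk)
  set T : Finset (Unit ⊕ ℕ ⊕ ℕ) := Finset.univ.image (embF q₁ q₂) with hTdef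
  set S : Finset (Unit ⊕ ℕ ⊕ ℕ) := {Sum.inl ()} with hSdef
  have hST : Disjoint S T := by
    rw [Finset.disjoint_left]
    intro m hmS hmT
    rw [hSdef, Finset.mem_singleton] at hmS
    rw [hTdef, Finset.mem_image] at hmT
    obtain ⟨k, -, hk⟩ := hmT
    subst hmS
    cases k <;> simp [embF] at hk
  have hMF : ∀ i, Measurable (mixFun Z ε₁ ε₂ i) := by
    rintro (u | i | j); exacts [hZm, hε₁m i, hε₂m j]
  have base := hindep.indepFun_finset S T hST hMF
  have hmem₁ : ∀ i : Fin q₁, (Sum.inr (Sum.inl (i : ℕ)) : Unit ⊕ ℕ ⊕ ℕ) ∈ T :=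
    fun i => Finset.mem_image.mpr ⟨Sum.inl i, Finset.mem_univ _, rfl⟩
  have hmem₂ : ∀ j : Fin q₂, (Sum.inr (Sum.inr (j : ℕ)) : Unit ⊕ ℕ ⊕ ℕ) ∈ T :=
    fun j => Finset.mem_image.mpr ⟨Sum.inr j, Finset.mem_univ _, rfl⟩
  have hmemS : (Sum.inl () : Unit ⊕ ℕ ⊕ ℕ) ∈ S := Finset.mem_singleton_self _
  have hφ₁m : Measurable (fun v : (∀ m : {m // m ∈ S}, mixCodom d m) =>
      (v ⟨Sum.inl (), hmemS⟩ : Fin d → ℝ)) := measurable_pi_apply _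
  have hφ₂m : Measurable (pickT (d := d) T hmem₁ hmem₂) := by
    apply measurable_pi_lambda
    rintro (i | j)
    · exact measurable_pi_apply (⟨Sum.inr (Sum.inl (i : ℕ)), hmem₁ i⟩ : {m // m ∈ T})
    · exact measurable_pi_apply (⟨Sum.inr (Sum.inr (j : ℕ)), hmem₂ j⟩ : {m // m ∈ T})
  have hZW : IndepFun Z W P := by
    have h2 := base.comp hφ₁m hφ₂m
    have e₁ : (fun v : (∀ m : {m // m ∈ S}, mixCodom d m) =>
        (v ⟨Sum.inl (), hmemS⟩ : Fin d → ℝ)) ∘ (fun a (i : S) => mixFun Z ε₁ ε₂ i a) = Z := rfl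
    have e₂ : (pickT (d := d) T hmem₁ hmem₂) ∘ (fun a (i : T) => mixFun Z ε₁ ε₂ i a) = W := by
      funext ω k; cases k <;> rfl
    rwa [e₁, e₂] at h2
  set E : Set ((Fin d → ℝ) × (Fin q₁ ⊕ Fin q₂ → ℝ)) := {p | ∀ k, p.2 k ≤ h k p.1} with hEdef
  have hE : MeasurableSet E := by
    have : E = ⋂ k, {p : (Fin d → ℝ) × (Fin q₁ ⊕ Fin q₂ → ℝ) | p.2 k ≤ h k p.1} := by
      ext p; simp [hEdef]
    rw [this]
    exact MeasurableSet.iInter fun k => measurableSet_le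
      (measurable_snd.eval) ((hhm k).comp measurable_fst)
  have hset : {ω | (∀ i : Fin q₁, ε₁ i ω ≤ h₁ i (Z ω)) ∧ (∀ j : Fin q₂, ε₂ j ω ≤ h₂ j (Z ω))}
      = (fun ω => (Z ω, W ω)) ⁻¹' E := by
    ext ω
    simp only [Set.mem_setOf_eq, Set.mem_preimage, hEdef, hWdef, hYdef, hhdef, Sum.forall,
      Sum.elim_inl, Sum.elim_inr]
  -- the product formula for constants
  have hprod : ∀ c : Fin q₁ ⊕ Fin q₂ → ℝ,
      P (⋂ k, (Y k) ⁻¹' Set.Iic (c k)) = ∏ k, P ((Y k) ⁻¹' Set.Iic (c k)) := by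
    intro c
    set c₁ : ℕ → ℝ := fun i => if hi : i < q₁ then c (Sum.inl ⟨i, hi⟩) else 0 with hc₁def
    set c₂ : ℕ → ℝ := fun j => if hj : j < q₂ then c (Sum.inr ⟨j, hj⟩) else 0 with hc₂def
    set sfun : (Unit ⊕ ℕ ⊕ ℕ) → Set Ω := fun m =>
      match m with
      | Sum.inl _ => Set.univ
      | Sum.inr (Sum.inl i) => ε₁ i ⁻¹' Set.Iic (c₁ i)
      | Sum.inr (Sum.inr j) => ε₂ j ⁻¹' Set.Iic (c₂ j)
      with hsfundef
    have hs : ∀ m ∈ T, MeasurableSet[(mixCodomMeasurableSpace d m).comap (mixFun Z ε₁ ε₂ m)]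
        (sfun m) := by
      intro m hm
      obtain ⟨k, -, rfl⟩ := Finset.mem_image.mp hm
      cases k with
      | inl i =>
        simp only [embF]
        refine MeasurableSpace.measurableSet_comap.mpr ⟨(Set.Iic (c₁ i) : Set ℝ), (measurableSet_Iic : MeasurableSet (Set.Iic (c₁ i))), ?_⟩
        simp only [hsfundef]
        rfl
      | inr j =>
        simp only [embF]
        refine MeasurableSpace.measurableSet_comap.mpr ⟨(Set.Iic (c₂ j) : Set ℝ), (measurableSet_Iic : MeasurableSet (Set.Iic (c₂ j))), ?_⟩
        simp only [hsfundef]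
        rfl
    have key := hindep.meas_biInter (S := T) hs
    have hsfe : ∀ k : Fin q₁ ⊕ Fin q₂, sfun (embF q₁ q₂ k) = (Y k) ⁻¹' Set.Iic (c k) := by
      rintro (i | j)
      · show ε₁ i ⁻¹' Set.Iic (c₁ i) = _
        rw [hc₁def]
        simp only [Fin.is_lt, dif_pos, Fin.eta]
        rfl
      · show ε₂ j ⁻¹' Set.Iic (c₂ j) = _
        rw [hc₂def]
        simp only [Fin.is_lt, dif_pos, Fin.eta]
        rfl
    have hleft : ⋂ m ∈ T, sfun m = ⋂ k, (Y k) ⁻¹' Set.Iic (c k) := by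
      rw [hTdef]
      ext ω
      simp only [Set.mem_iInter, Finset.mem_image, Finset.mem_univ, true_and]
      constructor
      · intro hmem k
        rw [← hsfe k]
        exact hmem _ ⟨k, rfl⟩
      · rintro hmem m ⟨k, rfl⟩
        rw [hsfe k]
        exact hmem k
    have hright : ∏ m ∈ T, P (sfun m) = ∏ k, P ((Y k) ⁻¹' Set.Iic (c k)) := by
      rw [hTdef, Finset.prod_image (fun k _ k' _ hkk => hembinj hkk)]
      exact Finset.prod_congr rfl fun k _ => by rw [hsfe k]
    rw [hleft] at key
    rw [hright] at key
    exact key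
  -- main computation
  rw [hset, ← Measure.map_apply (hZm.prodMk hWm) hE,
    (indepFun_iff_map_prod_eq_prod_map_map hZm.aemeasurable hWm.aemeasurable).mp hZW,
    Measure.prod_apply hE]
  have hsec : ∀ z : Fin d → ℝ,
      (P.map W) {w | (z, w) ∈ E} =
        (∏ i ∈ Finset.range q₁, P {ω' | ε₁ i ω' ≤ h₁ i z}) *
        (∏ j ∈ Finset.range q₂, P {ω' | ε₂ j ω' ≤ h₂ j z}) := by
    intro z
    have hBeq : {w : Fin q₁ ⊕ Fin q₂ → ℝ | (z, w) ∈ E} =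
        Set.univ.pi (fun k => Set.Iic (h k z)) := by
      ext w
      simp [hEdef, Set.mem_pi, Pi.le_def]
    have hBm : MeasurableSet (Set.univ.pi (fun k : Fin q₁ ⊕ Fin q₂ => Set.Iic (h k z))) :=
      MeasurableSet.univ_pi fun k => measurableSet_Iic
    rw [hBeq, Measure.map_apply hWm hBm]
    have hpre : W ⁻¹' (Set.univ.pi (fun k => Set.Iic (h k z))) =
        ⋂ k, (Y k) ⁻¹' Set.Iic (h k z) := by
      ext ω; simp [hWdef, Set.mem_pi, Pi.le_def]
    rw [hpre, hprod (fun k => h k z), Fintype.prod_sum_type]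
    congr 1
    · rw [← Fin.prod_univ_eq_prod_range (fun i => P {ω' | ε₁ i ω' ≤ h₁ i z}) q₁]
      exact Finset.prod_congr rfl fun i _ => rfl
    · rw [← Fin.prod_univ_eq_prod_range (fun j => P {ω' | ε₂ j ω' ≤ h₂ j z}) q₂]
      exact Finset.prod_congr rfl fun j _ => rfl
  calc ∫⁻ z, (P.map W) {w | (z, w) ∈ E} ∂(P.map Z)
      = ∫⁻ z, (∏ i ∈ Finset.range q₁, P {ω' | ε₁ i ω' ≤ h₁ i z}) *
              (∏ j ∈ Finset.range q₂, P {ω' | ε₂ j ω' ≤ h₂ j z}) ∂(P.map Z) :=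
        lintegral_congr hsec
    _ = ∫⁻ ω, (∏ i ∈ Finset.range q₁, P {ω' | ε₁ i ω' ≤ h₁ i (Z ω)}) *
              (∏ j ∈ Finset.range q₂, P {ω' | ε₂ j ω' ≤ h₂ j (Z ω)}) ∂P := by
        apply lintegral_map _ hZm
        apply Measurable.mul
        · apply Finset.measurable_prod
          intro i _
          have hmono : Monotone (fun cc : ℝ => P {ω' | ε₁ i ω' ≤ cc}) := by
            intro c c' hcc
            exact measure_mono fun ω' hω' => le_trans hω' hcc
          exact hmono.measurable.comp (hh₁ i)
        · apply Finset.measurable_prod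
          intro j _
          have hmono : Monotone (fun cc : ℝ => P {ω' | ε₂ j ω' ≤ cc}) := by
            intro c c' hcc
            exact measure_mono fun ω' hω' => le_trans hω' hcc
          exact hmono.measurable.comp (hh₂ j)

lemma cdf_toReal {Ω : Type*} [MeasurableSpace Ω] (P : Measure Ω) [IsProbabilityMeasure P]
    (Y : Ω → ℝ) (hY : Measurable Y) (c : ℝ) :
    (P {ω | Y ω ≤ c}).toReal = 1 - (P {ω | c < Y ω}).toReal := by
  have hms : MeasurableSet {ω | Y ω ≤ c} := hY measurableSet_Iic
  have hcompl : {ω | c < Y ω} = {ω | Y ω ≤ c}ᶜ := by ext ω; simp [not_le]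
  rw [hcompl, prob_compl_eq_one_sub hms,
    ENNReal.toReal_sub_of_le prob_le_one ENNReal.one_ne_top, ENNReal.toReal_one]
  ring

lemma tail_toReal_mem {Ω : Type*} [MeasurableSpace Ω] (P : Measure Ω) [IsProbabilityMeasure P]
    (Y : Ω → ℝ) (c : ℝ) : (P {ω | c < Y ω}).toReal ∈ Set.Icc (0:ℝ) 1 :=
  ⟨ENNReal.toReal_nonneg, by
    rw [← ENNReal.toReal_one]
    exact ENNReal.toReal_mono ENNReal.one_ne_top prob_le_one⟩

lemma tail_toReal_antitone {Ω : Type*} [MeasurableSpace Ω] (P : Measure Ω)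
    [IsProbabilityMeasure P] (Y : Ω → ℝ) :
    Antitone (fun c => (P {ω | c < Y ω}).toReal) := by
  intro c c' hcc
  apply ENNReal.toReal_mono (measure_ne_top _ _)
  exact measure_mono fun ω hω => lt_of_le_of_lt hcc hω


/-- Prop. 2, Case 3, first subcase: `α₁ > α₂` and `p₁/p₂ → C ∈ [0,∞)` imply `a₁/a₂ → 0` and `P(Q ≤ a₂ x) → Ψ_{α₂}(x)` for all `x > 0`. -/
theorem prop2_case3_sub1
    {Ω : Type*} [MeasurableSpace Ω] (P : Measure Ω) [IsProbabilityMeasure P]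
    (d : ℕ) (Z : Ω → Fin d → ℝ) (hZm : Measurable Z)
    (f g : ℕ → (Fin d → ℝ) → ℝ) (hfm : ∀ i, Measurable (f i)) (hgm : ∀ j, Measurable (g j))
    (hfbdd : ∀ᵐ ω ∂P, ∃ M : ℝ, ∀ i, |f i (Z ω)| ≤ M)
    (hgbdd : ∀ᵐ ω ∂P, ∃ M : ℝ, ∀ j, |g j (Z ω)| ≤ M)
    (C₁ C₂ : ℝ) (hC₁ : 0 < C₁) (hC₁₂ : C₁ ≤ C₂)
    (σ σt : ℕ → ℝ) (hσ : ∀ i, σ i ∈ Set.Icc C₁ C₂) (hσt : ∀ j, σt j ∈ Set.Icc C₁ C₂)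
    (α₁ α₂ : ℝ) (hα₁ : 0 < α₁) (hα₂ : 0 < α₂)
    (ε₁ ε₂ : ℕ → Ω → ℝ) (hε₁m : ∀ i, Measurable (ε₁ i)) (hε₂m : ∀ j, Measurable (ε₂ j))
    (hid₁ : ∀ i, IdentDistrib (ε₁ i) (ε₁ 0) P P)
    (hid₂ : ∀ j, IdentDistrib (ε₂ j) (ε₂ 0) P P)
    (hindep : iIndepFun (m := fun i => mixCodomMeasurableSpace d i) (mixFun Z ε₁ ε₂) P)
    (htail₁ : Tendsto (fun x : ℝ => x ^ α₁ * (P {ω | x < ε₁ 0 ω}).toReal) atTop (nhds 1))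
    (htail₂ : Tendsto (fun x : ℝ => x ^ α₂ * (P {ω | x < ε₂ 0 ω}).toReal) atTop (nhds 1))
    (X₁ X₂ : ℕ → Ω → ℝ)
    (hX₁ : ∀ i ω, X₁ i ω = f i (Z ω) + σ i * ε₁ i ω)
    (hX₂ : ∀ j ω, X₂ j ω = g j (Z ω) + σt j * ε₂ j ω)
    (p₁ p₂ : ℕ → ℕ) (hp₁pos : ∀ n, 0 < p₁ n) (hp₂pos : ∀ n, 0 < p₂ n)
    (hp₁ : Tendsto (fun n => (p₁ n : ℝ)) atTop atTop)
    (hp₂ : Tendsto (fun n => (p₂ n : ℝ)) atTop atTop)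
    (hα : α₂ < α₁)
    (C : ℝ) (hC : 0 ≤ C)
    (hratio : Tendsto (fun n => (p₁ n : ℝ) / (p₂ n : ℝ)) atTop (nhds C)) :
    Tendsto (fun n => normConst σ α₁ (p₁ n) / normConst σt α₂ (p₂ n)) atTop (nhds 0) ∧
    ∀ x : ℝ, 0 < x →
      Tendsto (fun n => (P {ω | Qmax X₁ X₂ (p₁ n) (p₂ n) ω ≤ normConst σt α₂ (p₂ n) * x}).toReal) atTop (nhds (frechetCDF α₂ x)) := by
  have hC₂ : 0 < C₂ := lt_of_lt_of_le hC₁ hC₁₂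
  have hσpos : ∀ i, 0 < σ i := fun i => lt_of_lt_of_le hC₁ (hσ i).1
  have hσtpos : ∀ j, 0 < σt j := fun j => lt_of_lt_of_le hC₁ (hσt j).1
  set a : ℕ → ℝ := fun n => normConst σt α₂ (p₂ n) with hadef
  have hbnds : ∀ n, C₁ * (p₂ n : ℝ) ^ (1/α₂) ≤ a n ∧ a n ≤ C₂ * (p₂ n : ℝ) ^ (1/α₂) :=
    fun n => normConst_le hα₂ hC₁ hσt (p₂ n)
  have hp₂1 : ∀ n, (1:ℝ) ≤ (p₂ n : ℝ) := fun n => by exact_mod_cast hp₂pos n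
  have hp₁1 : ∀ n, (1:ℝ) ≤ (p₁ n : ℝ) := fun n => by exact_mod_cast hp₁pos n
  have hp₂0 : ∀ n, (0:ℝ) < (p₂ n : ℝ) := fun n => lt_of_lt_of_le one_pos (hp₂1 n)
  have ha_pos : ∀ n, 0 < a n := fun n =>
    lt_of_lt_of_le (mul_pos hC₁ (Real.rpow_pos_of_pos (hp₂0 n) _)) (hbnds n).1
  have ha : Tendsto a atTop atTop := by
    apply tendsto_atTop_mono (fun n => (hbnds n).1)
    have h1 : Tendsto (fun n => ((p₂ n : ℝ)) ^ (1/α₂)) atTop atTop :=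
      (tendsto_rpow_atTop (by positivity)).comp hp₂
    exact h1.const_mul_atTop hC₁
  -- eventual comparison of p₁ and p₂
  have hev : ∀ᶠ n in atTop, (p₁ n : ℝ) ≤ (C+1) * (p₂ n : ℝ) := by
    filter_upwards [hratio.eventually_lt_const (lt_add_one C)] with n hn
    have hp2 : (0:ℝ) < (p₂ n : ℝ) := lt_of_lt_of_le one_pos (hp₂1 n)
    rw [div_lt_iff₀ hp2] at hn
    linarith
  -- PART 1
  have part1 : Tendsto (fun n => normConst σ α₁ (p₁ n) / normConst σt α₂ (p₂ n))
      atTop (nhds 0) := by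
    have hbnds1 : ∀ n, C₁ * (p₁ n : ℝ) ^ (1/α₁) ≤ normConst σ α₁ (p₁ n) ∧
        normConst σ α₁ (p₁ n) ≤ C₂ * (p₁ n : ℝ) ^ (1/α₁) :=
      fun n => normConst_le hα₁ hC₁ hσ (p₁ n)
    set K : ℝ := C₂ * (C+1) ^ (1/α₁) / C₁ with hKdef
    have hγ : (0:ℝ) < 1/α₂ - 1/α₁ := by
      have := one_div_lt_one_div_of_lt hα₂ hα
      linarith
    apply squeeze_zero' (g := fun n => K * ((p₂ n : ℝ)) ^ (-(1/α₂ - 1/α₁)))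
    · filter_upwards with n
      have h1 := (hbnds1 n).1
      have h2 := (hbnds n).1
      have hnum : 0 ≤ normConst σ α₁ (p₁ n) :=
        le_trans (by positivity) h1
      exact div_nonneg hnum (ha_pos n).le
    · filter_upwards [hev] with n hn
      have hp2 : (0:ℝ) < (p₂ n : ℝ) := lt_of_lt_of_le one_pos (hp₂1 n)
      have hnum : normConst σ α₁ (p₁ n) ≤ C₂ * (C+1) ^ (1/α₁) * (p₂ n : ℝ) ^ (1/α₁) := by
        refine le_trans (hbnds1 n).2 ?_
        have h3 : ((p₁ n : ℝ)) ^ (1/α₁) ≤ ((C+1) * (p₂ n : ℝ)) ^ (1/α₁) :=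
          Real.rpow_le_rpow (Nat.cast_nonneg _) hn (by positivity)
        have h4 : ((C+1) * (p₂ n : ℝ)) ^ (1/α₁) = (C+1) ^ (1/α₁) * ((p₂ n : ℝ)) ^ (1/α₁) :=
          Real.mul_rpow (by linarith) hp2.le
        calc C₂ * ((p₁ n : ℝ)) ^ (1/α₁) ≤ C₂ * ((C+1) * (p₂ n : ℝ)) ^ (1/α₁) := by
              exact mul_le_mul_of_nonneg_left h3 hC₂.le
          _ = C₂ * (C+1) ^ (1/α₁) * ((p₂ n : ℝ)) ^ (1/α₁) := by rw [h4]; ring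
      have hden : C₁ * (p₂ n : ℝ) ^ (1/α₂) ≤ a n := (hbnds n).1
      have hdenpos : (0:ℝ) < C₁ * (p₂ n : ℝ) ^ (1/α₂) := by positivity
      have h5 : normConst σ α₁ (p₁ n) / a n ≤
          (C₂ * (C+1) ^ (1/α₁) * (p₂ n : ℝ) ^ (1/α₁)) / (C₁ * (p₂ n : ℝ) ^ (1/α₂)) := by
        apply div_le_div₀ (by positivity) hnum hdenpos hden
      refine le_trans h5 (le_of_eq ?_)
      rw [hKdef]
      rw [show -(1/α₂ - 1/α₁) = 1/α₁ - 1/α₂ by ring, Real.rpow_sub hp2]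
      field_simp
      try ring
    · have h6 : Tendsto (fun n => ((p₂ n : ℝ)) ^ (-(1/α₂ - 1/α₁))) atTop (nhds 0) :=
        (tendsto_rpow_neg_atTop hγ).comp hp₂
      simpa using h6.const_mul K
  refine ⟨part1, ?_⟩
  -- PART 2
  intro x hx
  set T₁r : ℝ → ℝ := fun c => (P {ω | c < ε₁ 0 ω}).toReal with hT₁rdef
  set T₂r : ℝ → ℝ := fun c => (P {ω | c < ε₂ 0 ω}).toReal with hT₂rdef
  set F : ℕ → Ω → ℝ := fun n ω =>
    (∏ i ∈ Finset.range (p₁ n), (1 - T₁r ((a n * x - f i (Z ω))/σ i))) *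
    (∏ j ∈ Finset.range (p₂ n), (1 - T₂r ((a n * x - g j (Z ω))/σt j))) with hFdef
  -- the probability as an integral
  have hFP : ∀ n, (P {ω | Qmax X₁ X₂ (p₁ n) (p₂ n) ω ≤ a n * x}).toReal =
      ∫ ω, F n ω ∂P := by
    intro n
    set t : ℝ := a n * x with htdef
    set h₁ : ℕ → (Fin d → ℝ) → ℝ := fun i z => (t - f i z)/σ i with hh₁def
    set h₂ : ℕ → (Fin d → ℝ) → ℝ := fun j z => (t - g j z)/σt j with hh₂def
    have hh₁m : ∀ i, Measurable (h₁ i) := fun i =>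
      (measurable_const.sub (hfm i)).div_const _
    have hh₂m : ∀ j, Measurable (h₂ j) := fun j =>
      (measurable_const.sub (hgm j)).div_const _
    have hsetQ : {ω | Qmax X₁ X₂ (p₁ n) (p₂ n) ω ≤ t} =
        {ω | (∀ i : Fin (p₁ n), ε₁ i ω ≤ h₁ i (Z ω)) ∧
             (∀ j : Fin (p₂ n), ε₂ j ω ≤ h₂ j (Z ω))} := by
      ext ω
      have hne₁ : Nonempty (Fin (p₁ n)) := Fin.pos_iff_nonempty.mp (hp₁pos n)
      have hne₂ : Nonempty (Fin (p₂ n)) := Fin.pos_iff_nonempty.mp (hp₂pos n)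
      have hbdd₁ : BddAbove (Set.range fun i : Fin (p₁ n) => X₁ i ω) :=
        (Set.finite_range _).bddAbove
      have hbdd₂ : BddAbove (Set.range fun j : Fin (p₂ n) => X₂ j ω) :=
        (Set.finite_range _).bddAbove
      simp only [Set.mem_setOf_eq, Qmax, max_le_iff, ciSup_le_iff hbdd₁, ciSup_le_iff hbdd₂]
      constructor
      · rintro ⟨hA, hB⟩
        constructor
        · intro i
          have := hA i
          rw [hX₁ i ω] at this
          rw [hh₁def]
          rw [le_div_iff₀ (hσpos i)]
          linarith
        · intro j
          have := hB j
          rw [hX₂ j ω] at this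
          rw [hh₂def]
          rw [le_div_iff₀ (hσtpos j)]
          linarith
      · rintro ⟨hA, hB⟩
        constructor
        · intro i
          have := hA i
          rw [hh₁def, le_div_iff₀ (hσpos i)] at this
          rw [hX₁ i ω]
          linarith
        · intro j
          have := hB j
          rw [hh₂def, le_div_iff₀ (hσtpos j)] at this
          rw [hX₂ j ω]
          linarith
    -- apply freeze
    rw [hsetQ, freeze P d Z hZm ε₁ ε₂ hε₁m hε₂m hindep (p₁ n) (p₂ n) h₁ h₂ hh₁m hh₂m]
    -- identical distribution
    have hidf : ∀ (i : ℕ) (c : ℝ), P {ω' | ε₁ i ω' ≤ c} = P {ω' | ε₁ 0 ω' ≤ c} := by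
      intro i c
      exact (hid₁ i).measure_mem_eq measurableSet_Iic
    have hidg : ∀ (j : ℕ) (c : ℝ), P {ω' | ε₂ j ω' ≤ c} = P {ω' | ε₂ 0 ω' ≤ c} := by
      intro j c
      exact (hid₂ j).measure_mem_eq measurableSet_Iic
    set G : Ω → ENNReal := fun ω =>
      (∏ i ∈ Finset.range (p₁ n), P {ω' | ε₁ 0 ω' ≤ h₁ i (Z ω)}) *
      (∏ j ∈ Finset.range (p₂ n), P {ω' | ε₂ 0 ω' ≤ h₂ j (Z ω)}) with hGdef
    have hGcongr : ∀ ω, (∏ i ∈ Finset.range (p₁ n), P {ω' | ε₁ i ω' ≤ h₁ i (Z ω)}) *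
        (∏ j ∈ Finset.range (p₂ n), P {ω' | ε₂ j ω' ≤ h₂ j (Z ω)}) = G ω := by
      intro ω
      rw [hGdef]
      congr 1
      · exact Finset.prod_congr rfl fun i _ => hidf i _
      · exact Finset.prod_congr rfl fun j _ => hidg j _
    rw [lintegral_congr hGcongr]
    -- measurability of G
    have hGm : Measurable G := by
      rw [hGdef]
      apply Measurable.mul
      · apply Finset.measurable_prod
        intro i _
        have hmono : Monotone (fun cc : ℝ => P {ω' | ε₁ 0 ω' ≤ cc}) := fun c c' hcc =>
          measure_mono fun ω' hω' => le_trans hω' hcc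
        exact hmono.measurable.comp ((hh₁m i).comp hZm)
      · apply Finset.measurable_prod
        intro j _
        have hmono : Monotone (fun cc : ℝ => P {ω' | ε₂ 0 ω' ≤ cc}) := fun c c' hcc =>
          measure_mono fun ω' hω' => le_trans hω' hcc
        exact hmono.measurable.comp ((hh₂m j).comp hZm)
    have hGle : ∀ ω, G ω ≤ 1 := by
      intro ω
      rw [hGdef]
      apply mul_le_one'
      · exact Finset.prod_le_one' fun i _ => prob_le_one
      · exact Finset.prod_le_one' fun j _ => prob_le_one
    have hGlt : ∀ᵐ ω ∂P, G ω < ⊤ :=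
      Filter.Eventually.of_forall fun ω => lt_of_le_of_lt (hGle ω) ENNReal.one_lt_top
    rw [← integral_toReal hGm.aemeasurable hGlt]
    congr 1
    funext ω
    rw [hGdef, hFdef]
    simp only
    rw [ENNReal.toReal_mul, ENNReal.toReal_prod, ENNReal.toReal_prod]
    congr 1
    · refine Finset.prod_congr rfl fun i _ => ?_
      rw [cdf_toReal P (ε₁ 0) (hε₁m 0) (h₁ i (Z ω)), hT₁rdef, hh₁def, htdef]
    · refine Finset.prod_congr rfl fun j _ => ?_
      rw [cdf_toReal P (ε₂ 0) (hε₂m 0) (h₂ j (Z ω)), hT₂rdef, hh₂def, htdef]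
  -- dominated convergence
  have hfr : frechetCDF α₂ x = Real.exp (-x ^ (-α₂)) := if_pos hx
  have hT₁rm : Measurable T₁r := (tail_toReal_antitone P (ε₁ 0)).measurable
  have hT₂rm : Measurable T₂r := (tail_toReal_antitone P (ε₂ 0)).measurable
  have hFm : ∀ n, AEStronglyMeasurable (F n) P := by
    intro n
    apply Measurable.aestronglyMeasurable
    rw [hFdef]
    apply Measurable.mul
    · apply Finset.measurable_prod
      intro i _
      exact (measurable_const.sub (hT₁rm.comp
        (((measurable_const.sub ((hfm i).comp hZm))).div_const _)))
    · apply Finset.measurable_prod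
      intro j _
      exact (measurable_const.sub (hT₂rm.comp
        (((measurable_const.sub ((hgm j).comp hZm))).div_const _)))
  have hFbd : ∀ n, ∀ᵐ ω ∂P, ‖F n ω‖ ≤ 1 := by
    intro n
    apply Filter.Eventually.of_forall
    intro ω
    rw [hFdef]
    simp only [Real.norm_eq_abs]
    have h1 : ∀ (Y : Ω → ℝ) (c : ℝ), 0 ≤ 1 - (P {ω' | c < Y ω'}).toReal ∧
        1 - (P {ω' | c < Y ω'}).toReal ≤ 1 := by
      intro Y c
      have := tail_toReal_mem P Y c
      constructor <;> [linarith [this.2]; linarith [this.1]]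
    have hP1 : 0 ≤ ∏ i ∈ Finset.range (p₁ n), (1 - T₁r ((a n * x - f i (Z ω))/σ i)) :=
      Finset.prod_nonneg fun i _ => (h1 (ε₁ 0) _).1
    have hP1' : ∏ i ∈ Finset.range (p₁ n), (1 - T₁r ((a n * x - f i (Z ω))/σ i)) ≤ 1 :=
      Finset.prod_le_one (fun i _ => (h1 (ε₁ 0) _).1) (fun i _ => (h1 (ε₁ 0) _).2)
    have hP2 : 0 ≤ ∏ j ∈ Finset.range (p₂ n), (1 - T₂r ((a n * x - g j (Z ω))/σt j)) :=
      Finset.prod_nonneg fun j _ => (h1 (ε₂ 0) _).1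
    have hP2' : ∏ j ∈ Finset.range (p₂ n), (1 - T₂r ((a n * x - g j (Z ω))/σt j)) ≤ 1 :=
      Finset.prod_le_one (fun j _ => (h1 (ε₂ 0) _).1) (fun j _ => (h1 (ε₂ 0) _).2)
    rw [abs_le]
    refine ⟨by linarith [mul_nonneg hP1 hP2], ?_⟩
    have h9 := mul_le_mul hP1' hP2' hP2 zero_le_one
    simpa using h9
  have hnegl : Tendsto (fun n => (p₁ n : ℝ) * a n ^ (-α₁)) atTop (nhds 0) := by
    have hexp : (0:ℝ) < α₁/α₂ - 1 := by
      rw [sub_pos, lt_div_iff₀ hα₂, one_mul]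
      exact hα
    apply squeeze_zero' (g := fun n => ((C+1) * C₁ ^ (-α₁)) * ((p₂ n : ℝ)) ^ (-(α₁/α₂ - 1)))
    · filter_upwards with n
      have := ha_pos n
      positivity
    · filter_upwards [hev] with n hn
      have hp2 : (0:ℝ) < (p₂ n : ℝ) := hp₂0 n
      have h2 : a n ^ (-α₁) ≤ (C₁ * (p₂ n : ℝ) ^ (1/α₂)) ^ (-α₁) :=
        Real.rpow_le_rpow_of_nonpos (by positivity) (hbnds n).1 (by linarith)
      have h3 : (C₁ * (p₂ n : ℝ) ^ (1/α₂)) ^ (-α₁) =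
          C₁ ^ (-α₁) * ((p₂ n : ℝ)) ^ (-(α₁/α₂)) := by
        rw [Real.mul_rpow hC₁.le (Real.rpow_nonneg hp2.le _), ← Real.rpow_mul hp2.le]
        congr 2
        ring
      have h4 : (p₂ n : ℝ) * ((p₂ n : ℝ)) ^ (-(α₁/α₂)) = ((p₂ n : ℝ)) ^ (-(α₁/α₂ - 1)) := by
        rw [show -(α₁/α₂ - 1) = 1 + -(α₁/α₂) by ring, Real.rpow_add hp2, Real.rpow_one]
      calc (p₁ n : ℝ) * a n ^ (-α₁)
          ≤ ((C+1) * (p₂ n : ℝ)) * (C₁ ^ (-α₁) * ((p₂ n : ℝ)) ^ (-(α₁/α₂))) := by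
            apply mul_le_mul hn (h2.trans (le_of_eq h3))
              (Real.rpow_nonneg (ha_pos n).le _) (by positivity)
        _ = ((C+1) * C₁ ^ (-α₁)) * ((p₂ n : ℝ) * ((p₂ n : ℝ)) ^ (-(α₁/α₂))) := by ring
        _ = ((C+1) * C₁ ^ (-α₁)) * ((p₂ n : ℝ)) ^ (-(α₁/α₂ - 1)) := by rw [h4]
    · have h6 : Tendsto (fun n => ((p₂ n : ℝ)) ^ (-(α₁/α₂ - 1))) atTop (nhds 0) :=
        (tendsto_rpow_neg_atTop hexp).comp hp₂
      simpa using h6.const_mul ((C+1) * C₁ ^ (-α₁))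
  have hlim : ∀ᵐ ω ∂P, Tendsto (fun n => F n ω) atTop (nhds (Real.exp (-x ^ (-α₂)))) := by
    filter_upwards [hfbdd, hgbdd] with ω hMf hMg
    obtain ⟨M₁, hM₁⟩ := hMf
    obtain ⟨M₂, hM₂⟩ := hMg
    set M : ℝ := max (max M₁ M₂) 0 with hMdef
    have hM0 : 0 ≤ M := le_max_right _ _
    have hφb : ∀ i, |f i (Z ω)| ≤ M :=
      fun i => le_trans (hM₁ i) (le_trans (le_max_left _ _) (le_max_left _ _))
    have hψb : ∀ j, |g j (Z ω)| ≤ M :=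
      fun j => le_trans (hM₂ j) (le_trans (le_max_right _ _) (le_max_left _ _))
    have := key_tendsto α₁ α₂ x M C₁ C₂ hα₂ hα₁ hx hM0 hC₁ hC₁₂ σ σt
      (fun i => f i (Z ω)) (fun j => g j (Z ω)) hσ hσt hφb hψb
      T₁r T₂r (fun s => tail_toReal_mem P (ε₁ 0) s) (fun s => tail_toReal_mem P (ε₂ 0) s)
      htail₁ htail₂ p₁ p₂ a ha_pos ha
      (fun n => (normConst_rpow hα₂ hC₁ hσt (p₂ n)).symm) hnegl
    exact this
  have hdom := tendsto_integral_of_dominated_convergence (F := F)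
    (f := fun _ => Real.exp (-x ^ (-α₂))) (bound := fun _ => 1) hFm
    (integrable_const 1) hFbd hlim
  rw [integral_const] at hdom
  simp only [measure_univ, probReal_univ, ENNReal.toReal_one, smul_eq_mul, one_mul] at hdom
  rw [hfr]
  have : (fun n => (P {ω | Qmax X₁ X₂ (p₁ n) (p₂ n) ω ≤ normConst σt α₂ (p₂ n) * x}).toReal)
      = fun n => ∫ ω, F n ω ∂P := by
    funext n
    exact hFP n
  rw [this]
  exact hdom
end
end

section
/- In the two-group factor-model setup, suppose α₁ > α₂, p₁(n)/p₂(n) → ∞, and a_{2,p₂(n)} / a_{1,p₁(n)} → a for some constant a > 0. Then, for every x > 0, P(Q_{p₁(n), p₂(n)} ≤ a_{2,p₂(n)} x) → Ψ_{α₁}(a x) · Ψ_{α₂}(x) as n → ∞. (Proposition 2, Case 3, second subcase.) -/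
open MeasureTheory ProbabilityTheory Filter

noncomputable section

private lemma tendsto_of_abs_sub_le {f : ℕ → ℝ} {L : ℝ}
    (h : ∀ ε : ℝ, 0 < ε → ∀ᶠ n in atTop, |f n - L| ≤ ε) :
    Tendsto f atTop (nhds L) := by
  rw [Metric.tendsto_nhds]
  intro ε hε
  filter_upwards [h (ε/2) (by linarith)] with n hn
  rw [Real.dist_eq]
  linarith

private lemma abs_le_of_tendsto {f : ℕ → ℝ} {L ε : ℝ} (h : Tendsto f atTop (nhds L))
    (hε : 0 < ε) : ∀ᶠ n in atTop, |f n - L| ≤ ε := by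
  filter_upwards [Metric.tendsto_nhds.mp h ε hε] with n hn
  rw [Real.dist_eq] at hn; exact hn.le

private lemma aux_ratio_one {t : ℕ → ℝ} (ht : Tendsto t atTop atTop) (b α : ℝ) :
    Tendsto (fun n => (t n / (t n + b)) ^ α) atTop (nhds 1) := by
  have h1 : Tendsto (fun n => t n + b) atTop atTop := tendsto_atTop_add_const_right _ b ht
  have h2 : Tendsto (fun n => b / (t n + b)) atTop (nhds 0) :=
    Tendsto.div_atTop tendsto_const_nhds h1
  have h3 : Tendsto (fun n => 1 - b / (t n + b)) atTop (nhds 1) := by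
    simpa using tendsto_const_nhds.sub h2
  have h4 : Tendsto (fun n => t n / (t n + b)) atTop (nhds 1) := by
    apply h3.congr'
    filter_upwards [h1.eventually_gt_atTop 0] with n hn
    field_simp
    ring
  have h5 : Tendsto (fun y : ℝ => y ^ α) (nhds 1) (nhds 1) := by
    have := (Real.continuousAt_rpow_const 1 α (Or.inl one_ne_zero)).tendsto
    simpa using this
  exact h5.comp h4

private lemma aux_sum_tendsto
    {α C₁ C₂ M L : ℝ} (hα : 0 < α) (hC₁ : 0 < C₁) (hC₁₂ : C₁ ≤ C₂) (hM : 0 ≤ M) (hL : 0 ≤ L)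
    (s : ℝ → ℝ) (hs0 : ∀ u, 0 ≤ s u)
    (htail : Tendsto (fun u : ℝ => u ^ α * s u) atTop (nhds 1))
    (σ c : ℕ → ℝ) (hσl : ∀ i, C₁ ≤ σ i) (hσu : ∀ i, σ i ≤ C₂) (hc : ∀ i, |c i| ≤ M)
    (t : ℕ → ℝ) (ht : Tendsto t atTop atTop) (p : ℕ → ℕ)
    (hsum : Tendsto (fun n => (∑ i ∈ Finset.range (p n), σ i ^ α) / t n ^ α) atTop (nhds L)) :
    Tendsto (fun n => ∑ i ∈ Finset.range (p n), s ((t n - c i) / σ i)) atTop (nhds L) := by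
  have hσp : ∀ i, (0:ℝ) < σ i := fun i => lt_of_lt_of_le hC₁ (hσl i)
  have hcM : ∀ i, -M ≤ c i ∧ c i ≤ M := fun i => abs_le.mp (hc i)
  set u : ℕ → ℕ → ℝ := fun n i => (t n - c i) / σ i with hu
  have huge : ∀ V : ℝ, ∀ᶠ n in atTop, ∀ i, V ≤ u n i := by
    intro V
    have hv : Tendsto (fun n => (t n - M) / C₂) atTop atTop :=
      (tendsto_atTop_add_const_right _ (-M) ht).atTop_div_const (lt_of_lt_of_le hC₁ hC₁₂)
    filter_upwards [hv.eventually_ge_atTop V, ht.eventually_ge_atTop M] with n h1 h2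
    intro i
    refine le_trans h1 ?_
    calc (t n - M) / C₂ ≤ (t n - M) / σ i :=
          div_le_div_of_nonneg_left (by linarith) (hσp i) (hσu i)
      _ ≤ (t n - c i) / σ i :=
          div_le_div_of_nonneg_right (by linarith [(hcM i).2]) (hσp i).le
  set Lo : ℕ → ℝ := fun n => (∑ i ∈ Finset.range (p n), σ i ^ α) / (t n + M) ^ α with hLodef
  set Hi : ℕ → ℝ := fun n => (∑ i ∈ Finset.range (p n), σ i ^ α) / (t n - M) ^ α with hHidef
  have key : ∀ b : ℝ, Tendsto (fun n => (∑ i ∈ Finset.range (p n), σ i ^ α) / (t n + b) ^ α)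
      atTop (nhds L) := by
    intro b
    have h1 := hsum.mul (aux_ratio_one ht b α)
    rw [mul_one] at h1
    apply h1.congr'
    filter_upwards [ht.eventually_gt_atTop (max 0 (-b))] with n hn
    have hb1 : (0:ℝ) < t n := lt_of_le_of_lt (le_max_left _ _) hn
    have hb2 : (0:ℝ) < t n + b := by
      have := lt_of_le_of_lt (le_max_right 0 (-b)) hn; linarith
    have e1 : (t n / (t n + b)) ^ α = t n ^ α / (t n + b) ^ α :=
      Real.div_rpow hb1.le hb2.le α
    rw [e1]
    have h2 : t n ^ α ≠ 0 := (Real.rpow_pos_of_pos hb1 α).ne'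
    field_simp
  have hLo : Tendsto Lo atTop (nhds L) := key M
  have hHi : Tendsto Hi atTop (nhds L) := by
    have := key (-M); simpa [hHidef, sub_eq_add_neg] using this
  have hub : ∀ n, M < t n → ∀ i,
      σ i ^ α / (t n + M) ^ α ≤ u n i ^ (-α) ∧ u n i ^ (-α) ≤ σ i ^ α / (t n - M) ^ α := by
    intro n hn i
    have h1 : (0:ℝ) < t n - M := by linarith
    have h2 : (0:ℝ) < t n - c i := by linarith [(hcM i).2]
    have h3 : t n - c i ≤ t n + M := by linarith [(hcM i).1]
    have hup : (0:ℝ) < u n i := div_pos h2 (hσp i)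
    have e1 : u n i ^ (-α) = σ i ^ α / (t n - c i) ^ α := by
      rw [Real.rpow_neg hup.le, Real.div_rpow h2.le (hσp i).le, inv_div]
    rw [e1]
    refine ⟨div_le_div_of_nonneg_left (Real.rpow_nonneg (hσp i).le α)
        (Real.rpow_pos_of_pos h2 α) (Real.rpow_le_rpow h2.le h3 hα.le), ?_⟩
    exact div_le_div_of_nonneg_left (Real.rpow_nonneg (hσp i).le α)
        (Real.rpow_pos_of_pos h1 α) (Real.rpow_le_rpow h1.le (by linarith [(hcM i).2]) hα.le)
  apply tendsto_of_abs_sub_le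
  intro ε hε
  have hL2 : (0:ℝ) < L + 2 := by linarith
  set ε' : ℝ := min 1 (ε / (L + 2)) with hε'def
  have hε' : 0 < ε' := lt_min one_pos (div_pos hε hL2)
  have hε'1 : ε' ≤ 1 := min_le_left _ _
  have hε'2 : ε' * (L + 2) ≤ ε := by
    rw [← le_div_iff₀ hL2]; exact min_le_right _ _
  obtain ⟨V, hV⟩ :=
    (htail.eventually (Metric.closedBall_mem_nhds (1:ℝ) hε')).exists_forall_of_atTop
  filter_upwards [huge (max V 1), ht.eventually_gt_atTop M,
    abs_le_of_tendsto hLo hε', abs_le_of_tendsto hHi hε'] with n hV' htM hLo' hHi'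
  have hterm : ∀ i, (1 - ε') * u n i ^ (-α) ≤ s (u n i) ∧
      s (u n i) ≤ (1 + ε') * u n i ^ (-α) := by
    intro i
    have h1 : (1:ℝ) ≤ u n i := le_trans (le_max_right _ _) (hV' i)
    have h0 : (0:ℝ) < u n i := lt_of_lt_of_le one_pos h1
    have h2 := hV (u n i) (le_trans (le_max_left _ _) (hV' i))
    rw [Real.dist_eq, abs_le] at h2
    have hy : (0:ℝ) < u n i ^ α := Real.rpow_pos_of_pos h0 α
    have hinv : u n i ^ (-α) = (u n i ^ α)⁻¹ := Real.rpow_neg h0.le α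
    constructor
    · rw [hinv, mul_inv_le_iff₀ hy]
      nlinarith [h2.1]
    · rw [hinv, le_mul_inv_iff₀ hy]
      nlinarith [h2.2]
  have hunn : ∀ i, 0 ≤ u n i ^ (-α) := by
    intro i
    have h1 : (1:ℝ) ≤ u n i := le_trans (le_max_right _ _) (hV' i)
    exact Real.rpow_nonneg (by linarith) _
  have hupper : (∑ i ∈ Finset.range (p n), s (u n i)) ≤ (1 + ε') * Hi n := by
    rw [hHidef]
    calc (∑ i ∈ Finset.range (p n), s (u n i))
        ≤ ∑ i ∈ Finset.range (p n), (1 + ε') * (σ i ^ α / (t n - M) ^ α) := by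
          apply Finset.sum_le_sum
          intro i _
          exact le_trans (hterm i).2
            (mul_le_mul_of_nonneg_left (hub n htM i).2 (by linarith))
      _ = (1 + ε') * ((∑ i ∈ Finset.range (p n), σ i ^ α) / (t n - M) ^ α) := by
          rw [Finset.sum_div, Finset.mul_sum]
  have hlower : (1 - ε') * Lo n ≤ ∑ i ∈ Finset.range (p n), s (u n i) := by
    rw [hLodef]
    calc (1 - ε') * ((∑ i ∈ Finset.range (p n), σ i ^ α) / (t n + M) ^ α)
        = ∑ i ∈ Finset.range (p n), (1 - ε') * (σ i ^ α / (t n + M) ^ α) := by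
          rw [Finset.sum_div, Finset.mul_sum]
      _ ≤ ∑ i ∈ Finset.range (p n), s (u n i) := by
          apply Finset.sum_le_sum
          intro i _
          exact le_trans (mul_le_mul_of_nonneg_left (hub n htM i).1 (by linarith)) (hterm i).1
  have hS0 : 0 ≤ ∑ i ∈ Finset.range (p n), s (u n i) := Finset.sum_nonneg fun i _ => hs0 _
  have hLo'' : L - ε' ≤ Lo n := by linarith [(abs_le.mp hLo').1, (abs_le.mp hLo').2]
  have hHi'' : Hi n ≤ L + ε' := by linarith [(abs_le.mp hHi').1, (abs_le.mp hHi').2]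
  rw [abs_le]
  constructor
  · nlinarith
  · nlinarith

private lemma aux_prod_tendsto
    {α C₁ C₂ M L : ℝ} (hα : 0 < α) (hC₁ : 0 < C₁) (hC₁₂ : C₁ ≤ C₂) (hM : 0 ≤ M) (hL : 0 ≤ L)
    (s : ℝ → ℝ) (hs0 : ∀ u, 0 ≤ s u)
    (htail : Tendsto (fun u : ℝ => u ^ α * s u) atTop (nhds 1))
    (σ c : ℕ → ℝ) (hσl : ∀ i, C₁ ≤ σ i) (hσu : ∀ i, σ i ≤ C₂) (hc : ∀ i, |c i| ≤ M)
    (t : ℕ → ℝ) (ht : Tendsto t atTop atTop) (p : ℕ → ℕ)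
    (hsum : Tendsto (fun n => (∑ i ∈ Finset.range (p n), σ i ^ α) / t n ^ α) atTop (nhds L)) :
    Tendsto (fun n => ∏ i ∈ Finset.range (p n), (1 - s ((t n - c i) / σ i))) atTop
      (nhds (Real.exp (-L))) := by
  have hσp : ∀ i, (0:ℝ) < σ i := fun i => lt_of_lt_of_le hC₁ (hσl i)
  have hcM : ∀ i, -M ≤ c i ∧ c i ≤ M := fun i => abs_le.mp (hc i)
  set u : ℕ → ℕ → ℝ := fun n i => (t n - c i) / σ i with hu
  have hS := aux_sum_tendsto hα hC₁ hC₁₂ hM hL s hs0 htail σ c hσl hσu hc t ht p hsum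
  have huge : ∀ V : ℝ, ∀ᶠ n in atTop, ∀ i, V ≤ u n i := by
    intro V
    have hv : Tendsto (fun n => (t n - M) / C₂) atTop atTop :=
      (tendsto_atTop_add_const_right _ (-M) ht).atTop_div_const (lt_of_lt_of_le hC₁ hC₁₂)
    filter_upwards [hv.eventually_ge_atTop V, ht.eventually_ge_atTop M] with n h1 h2
    intro i
    refine le_trans h1 ?_
    calc (t n - M) / C₂ ≤ (t n - M) / σ i :=
          div_le_div_of_nonneg_left (by linarith) (hσp i) (hσu i)
      _ ≤ (t n - c i) / σ i :=
          div_le_div_of_nonneg_right (by linarith [(hcM i).2]) (hσp i).le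
  have hs_to0 : Tendsto s atTop (nhds 0) := by
    have h1 : Tendsto (fun u : ℝ => (u ^ α * s u) * u ^ (-α)) atTop (nhds 0) := by
      simpa using htail.mul (tendsto_rpow_neg_atTop hα)
    apply h1.congr'
    filter_upwards [eventually_gt_atTop 0] with v hv
    rw [mul_comm (v ^ α) (s v), mul_assoc, ← Real.rpow_add hv, add_neg_cancel,
      Real.rpow_zero, mul_one]
  have hsmall : ∀ η : ℝ, 0 < η → ∀ᶠ n in atTop, ∀ i, s (u n i) ≤ η := by
    intro η hη
    obtain ⟨V, hV⟩ :=
      (hs_to0.eventually (Metric.closedBall_mem_nhds (0:ℝ) hη)).exists_forall_of_atTop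
    filter_upwards [huge V] with n hn i
    have := hV (u n i) (hn i)
    rw [Real.dist_eq, sub_zero, abs_le] at this
    exact this.2
  have hT : Tendsto (fun n => ∑ i ∈ Finset.range (p n), Real.log (1 - s (u n i))) atTop
      (nhds (-L)) := by
    apply tendsto_of_abs_sub_le
    intro ε hε
    have hL1 : (0:ℝ) < L + 1 := by linarith
    set η : ℝ := min (1/2) (ε / (4 * (L + 1))) with hηdef
    have hη : 0 < η := lt_min (by norm_num) (div_pos hε (by linarith))
    have hη1 : η ≤ 1/2 := min_le_left _ _
    have hη2 : η * (4 * (L + 1)) ≤ ε := by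
      rw [← le_div_iff₀ (by linarith : (0:ℝ) < 4 * (L + 1))]; exact min_le_right _ _
    filter_upwards [hsmall η hη, abs_le_of_tendsto hS (ε := min (ε/2) 1) (by positivity)]
      with n hn hSn
    have hSn1 : ∑ i ∈ Finset.range (p n), s (u n i) ≤ L + 1 := by
      have := (abs_le.mp hSn).2
      have h2 : min (ε/2) 1 ≤ 1 := min_le_right _ _
      linarith
    have hSL : |(∑ i ∈ Finset.range (p n), s (u n i)) - L| ≤ ε / 2 :=
      le_trans hSn (min_le_left _ _)
    have hterm : ∀ i, |Real.log (1 - s (u n i)) + s (u n i)| ≤ 2 * η * s (u n i) := by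
      intro i
      set x := s (u n i) with hx
      have hx0 : 0 ≤ x := hs0 _
      have hxη : x ≤ η := hn i
      have h1 : |x| < 1 := by rw [abs_of_nonneg hx0]; linarith
      have h2 := Real.abs_log_sub_add_sum_range_le h1 1
      norm_num at h2
      rw [abs_of_nonneg hx0] at h2
      have h3 : x ^ 2 / (1 - x) ≤ 2 * η * x := by
        rw [div_le_iff₀ (by linarith : (0:ℝ) < 1 - x)]
        nlinarith
      calc |Real.log (1 - x) + x| = |x + Real.log (1 - x)| := by rw [add_comm]
        _ ≤ x ^ (1 + 1) / (1 - x) := h2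
        _ ≤ 2 * η * x := by norm_num at *; linarith
    have hsum2 : |(∑ i ∈ Finset.range (p n), Real.log (1 - s (u n i))) +
        ∑ i ∈ Finset.range (p n), s (u n i)| ≤ 2 * η * (L + 1) := by
      rw [← Finset.sum_add_distrib]
      calc |∑ i ∈ Finset.range (p n), (Real.log (1 - s (u n i)) + s (u n i))|
          ≤ ∑ i ∈ Finset.range (p n), |Real.log (1 - s (u n i)) + s (u n i)| :=
            Finset.abs_sum_le_sum_abs _ _
        _ ≤ ∑ i ∈ Finset.range (p n), 2 * η * s (u n i) :=
            Finset.sum_le_sum fun i _ => hterm i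
        _ = 2 * η * ∑ i ∈ Finset.range (p n), s (u n i) := by rw [Finset.mul_sum]
        _ ≤ 2 * η * (L + 1) := by nlinarith
    have := abs_le.mp hsum2
    have h4 := abs_le.mp hSL
    rw [abs_le]
    constructor <;> nlinarith
  have hexp : Tendsto (fun n => Real.exp (∑ i ∈ Finset.range (p n),
      Real.log (1 - s (u n i)))) atTop (nhds (Real.exp (-L))) :=
    (Real.continuous_exp.tendsto _).comp hT
  apply hexp.congr'
  filter_upwards [hsmall (1/2) (by norm_num)] with n hn
  rw [Real.exp_sum]
  apply Finset.prod_congr rfl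
  intro i _
  rw [Real.exp_log (by linarith [hn i] : (0:ℝ) < 1 - s (u n i))]

private lemma normConst_lb {α C₁ : ℝ} (hα : 0 < α) (hC₁ : 0 < C₁) {σ : ℕ → ℝ}
    (hσl : ∀ i, C₁ ≤ σ i) (p : ℕ) :
    (p : ℝ) ^ (1/α) * C₁ ≤ normConst σ α p := by
  have hsl : (p : ℝ) * C₁ ^ α ≤ ∑ i ∈ Finset.range p, σ i ^ α := by
    calc (p : ℝ) * C₁ ^ α = ∑ _i ∈ Finset.range p, C₁ ^ α := by
          rw [Finset.sum_const, Finset.card_range, nsmul_eq_mul]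
      _ ≤ ∑ i ∈ Finset.range p, σ i ^ α :=
          Finset.sum_le_sum fun i _ => Real.rpow_le_rpow hC₁.le (hσl i) hα.le
  have h2 : ((p : ℝ) * C₁ ^ α) ^ (1/α) ≤ normConst σ α p := by
    rw [normConst]
    exact Real.rpow_le_rpow (by positivity) hsl (by positivity)
  refine le_trans (le_of_eq ?_) h2
  rw [Real.mul_rpow (by positivity) (by positivity)]
  congr 1
  rw [← Real.rpow_mul hC₁.le, mul_one_div_cancel hα.ne', Real.rpow_one]

private lemma normConst_pos {α C₁ : ℝ} (hα : 0 < α) (hC₁ : 0 < C₁) {σ : ℕ → ℝ}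
    (hσl : ∀ i, C₁ ≤ σ i) {p : ℕ} (hp : 0 < p) : 0 < normConst σ α p := by
  refine lt_of_lt_of_le ?_ (normConst_lb hα hC₁ hσl p)
  have : (1:ℝ) ≤ (p : ℝ) := by exact_mod_cast hp
  have h1 : (0:ℝ) < (p : ℝ) ^ (1/α) := Real.rpow_pos_of_pos (by linarith) _
  positivity

private lemma aux_sum_ratio {α b : ℝ} (hα : 0 < α) (hb : 0 < b) (σ : ℕ → ℝ)
    (hσ0 : ∀ i, 0 ≤ σ i) (p : ℕ → ℕ) (t : ℕ → ℝ)
    (hApos : ∀ n, 0 < normConst σ α (p n)) (htpos : ∀ n, 0 < t n)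
    (hb' : Tendsto (fun n => t n / normConst σ α (p n)) atTop (nhds b)) :
    Tendsto (fun n => (∑ i ∈ Finset.range (p n), σ i ^ α) / t n ^ α) atTop
      (nhds (b ^ (-α))) := by
  have h1 : Tendsto (fun n => normConst σ α (p n) / t n) atTop (nhds b⁻¹) := by
    have h := hb'.inv₀ hb.ne'
    apply h.congr
    intro n
    rw [inv_div]
  have h2 : Tendsto (fun n => (normConst σ α (p n) / t n) ^ α) atTop (nhds (b⁻¹ ^ α)) :=
    ((Real.continuousAt_rpow_const b⁻¹ α (Or.inl (inv_ne_zero hb.ne'))).tendsto).comp h1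
  have h3 : b⁻¹ ^ α = b ^ (-α) := by
    rw [Real.rpow_neg hb.le, Real.inv_rpow hb.le]
  rw [h3] at h2
  apply h2.congr
  intro n
  rw [Real.div_rpow (hApos n).le (htpos n).le]
  congr 1
  rw [normConst, ← Real.rpow_mul (Finset.sum_nonneg fun i _ => Real.rpow_nonneg (hσ0 i) α),
    one_div, inv_mul_cancel₀ hα.ne', Real.rpow_one]

private lemma aux_measure_eq
    {Ω : Type*} [MeasurableSpace Ω] (P : Measure Ω) [IsProbabilityMeasure P]
    {d : ℕ} (Z : Ω → Fin d → ℝ) (hZm : Measurable Z)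
    (f g : ℕ → (Fin d → ℝ) → ℝ) (hfm : ∀ i, Measurable (f i)) (hgm : ∀ j, Measurable (g j))
    (σ σt : ℕ → ℝ) (hσp : ∀ i, 0 < σ i) (hσtp : ∀ j, 0 < σt j)
    (ε₁ ε₂ : ℕ → Ω → ℝ) (hε₁m : ∀ i, Measurable (ε₁ i)) (hε₂m : ∀ j, Measurable (ε₂ j))
    (hid₁ : ∀ i, IdentDistrib (ε₁ i) (ε₁ 0) P P)
    (hid₂ : ∀ j, IdentDistrib (ε₂ j) (ε₂ 0) P P)
    (hindep : iIndepFun (m := fun i => mixCodomMeasurableSpace d i) (mixFun Z ε₁ ε₂) P)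
    (X₁ X₂ : ℕ → Ω → ℝ)
    (hX₁ : ∀ i ω, X₁ i ω = f i (Z ω) + σ i * ε₁ i ω)
    (hX₂ : ∀ j ω, X₂ j ω = g j (Z ω) + σt j * ε₂ j ω)
    (m k : ℕ) (hm : 0 < m) (hk : 0 < k) (t : ℝ) :
    (P {ω | Qmax X₁ X₂ m k ω ≤ t}).toReal =
      ∫ ω, (∏ i ∈ Finset.range m, (P {ω' | ε₁ 0 ω' ≤ (t - f i (Z ω)) / σ i}).toReal) *
        (∏ j ∈ Finset.range k, (P {ω' | ε₂ 0 ω' ≤ (t - g j (Z ω)) / σt j}).toReal) ∂P := by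
  classical
  have hmix : ∀ i, Measurable (mixFun Z ε₁ ε₂ i) := by
    rintro (u | i | j)
    · exact hZm
    · exact hε₁m i
    · exact hε₂m j
  have hWm : Measurable (fun ω => ((fun i : Fin m => ε₁ i ω, fun j : Fin k => ε₂ j ω) :
      (Fin m → ℝ) × (Fin k → ℝ))) :=
    (measurable_pi_lambda _ fun i : Fin m => hε₁m i.val).prodMk
      (measurable_pi_lambda _ fun j : Fin k => hε₂m j.val)
  set W : Ω → (Fin m → ℝ) × (Fin k → ℝ) :=
    fun ω => (fun i => ε₁ i ω, fun j => ε₂ j ω) with hW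
  set A : Finset (Unit ⊕ ℕ ⊕ ℕ) :=
    (Finset.range m).image (fun i => (Sum.inr (Sum.inl i) : Unit ⊕ ℕ ⊕ ℕ)) with hA
  set B : Finset (Unit ⊕ ℕ ⊕ ℕ) :=
    (Finset.range k).image (fun j => (Sum.inr (Sum.inr j) : Unit ⊕ ℕ ⊕ ℕ)) with hB
  have hZW : IndepFun Z W P := by
    have hdisj : Disjoint ({Sum.inl ()} : Finset (Unit ⊕ ℕ ⊕ ℕ)) (A ∪ B) := by
      simp [Finset.disjoint_left, hA, hB]
    have h1 := hindep.indepFun_finset _ _ hdisj hmix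
    have hφ : Measurable (fun h : (∀ i : ({Sum.inl ()} : Finset (Unit ⊕ ℕ ⊕ ℕ)), mixCodom d i)
        => h ⟨Sum.inl (), by simp⟩) := measurable_pi_apply _
    have hψ : Measurable (fun h : (∀ i : (A ∪ B : Finset (Unit ⊕ ℕ ⊕ ℕ)), mixCodom d i) =>
        ((fun i : Fin m => h ⟨Sum.inr (Sum.inl i.val), by
            simp [hA, hB, Finset.mem_union, i.isLt]⟩,
          fun j : Fin k => h ⟨Sum.inr (Sum.inr j.val), by
            simp [hA, hB, Finset.mem_union, j.isLt]⟩) : (Fin m → ℝ) × (Fin k → ℝ))) := by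
      refine Measurable.prodMk ?_ ?_
      · exact measurable_pi_lambda _ fun i => measurable_pi_apply _
      · exact measurable_pi_lambda _ fun j => measurable_pi_apply _
    exact h1.comp hφ hψ
  -- the event as a preimage
  set E : Set ((Fin d → ℝ) × ((Fin m → ℝ) × (Fin k → ℝ))) :=
    {q | (∀ i : Fin m, q.2.1 i ≤ (t - f i q.1) / σ i) ∧
         (∀ j : Fin k, q.2.2 j ≤ (t - g j q.1) / σt j)} with hE
  have hEm : MeasurableSet E := by
    have h1 : E = (⋂ i : Fin m, {q : (Fin d → ℝ) × ((Fin m → ℝ) × (Fin k → ℝ)) |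
          q.2.1 i ≤ (t - f i q.1) / σ i}) ∩
        (⋂ j : Fin k, {q : (Fin d → ℝ) × ((Fin m → ℝ) × (Fin k → ℝ)) |
          q.2.2 j ≤ (t - g j q.1) / σt j}) := by
      ext q; simp [hE, Set.mem_iInter]
    rw [h1]
    apply MeasurableSet.inter
    · apply MeasurableSet.iInter
      intro i
      exact measurableSet_le measurable_snd.fst.eval
        ((((hfm i).comp measurable_fst).const_sub t).div_const _)
    · apply MeasurableSet.iInter
      intro j
      exact measurableSet_le measurable_snd.snd.eval
        ((((hgm j).comp measurable_fst).const_sub t).div_const _)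
  have hev : {ω | Qmax X₁ X₂ m k ω ≤ t} = (fun ω => (Z ω, W ω)) ⁻¹' E := by
    have : Nonempty (Fin m) := ⟨⟨0, hm⟩⟩
    have : Nonempty (Fin k) := ⟨⟨0, hk⟩⟩
    ext ω
    simp only [Set.mem_setOf_eq, Set.mem_preimage, Qmax, max_le_iff, hE]
    rw [ciSup_le_iff (Set.Finite.bddAbove (Set.finite_range _)),
      ciSup_le_iff (Set.Finite.bddAbove (Set.finite_range _))]
    constructor
    · rintro ⟨h1, h2⟩
      constructor
      · intro i
        have := h1 i
        rw [hX₁ i.val ω] at this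
        rw [le_div_iff₀ (hσp i.val), mul_comm]
        linarith
      · intro j
        have := h2 j
        rw [hX₂ j.val ω] at this
        rw [le_div_iff₀ (hσtp j.val), mul_comm]
        linarith
    · rintro ⟨h1, h2⟩
      constructor
      · intro i
        have := h1 i
        rw [le_div_iff₀ (hσp i.val), mul_comm] at this
        rw [hX₁ i.val ω]
        linarith
      · intro j
        have := h2 j
        rw [le_div_iff₀ (hσtp j.val), mul_comm] at this
        rw [hX₂ j.val ω]
        linarith
  -- the CDF-type functions
  set F₁ : ℝ → ENNReal := fun v => P {ω' | ε₁ 0 ω' ≤ v} with hF₁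
  set F₂ : ℝ → ENNReal := fun v => P {ω' | ε₂ 0 ω' ≤ v} with hF₂
  have hF₁mono : Monotone F₁ := fun v w hvw =>
    measure_mono (fun ω' (h : ε₁ 0 ω' ≤ v) => le_trans h hvw)
  have hF₂mono : Monotone F₂ := fun v w hvw =>
    measure_mono (fun ω' (h : ε₂ 0 ω' ≤ v) => le_trans h hvw)
  have hF₁meas : Measurable F₁ := hF₁mono.measurable
  have hF₂meas : Measurable F₂ := hF₂mono.measurable
  -- the conditional probability at fixed z
  have hrect : ∀ z : Fin d → ℝ,
      (P.map W) ((Set.univ.pi fun i : Fin m => Set.Iic ((t - f i z) / σ i)) ×ˢ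
        (Set.univ.pi fun j : Fin k => Set.Iic ((t - g j z) / σt j))) =
      (∏ i ∈ Finset.range m, F₁ ((t - f i z) / σ i)) *
        (∏ j ∈ Finset.range k, F₂ ((t - g j z) / σt j)) := by
    intro z
    rw [Measure.map_apply hWm
      ((MeasurableSet.univ_pi fun i => measurableSet_Iic).prod
        (MeasurableSet.univ_pi fun j => measurableSet_Iic))]
    set E' : (Unit ⊕ ℕ ⊕ ℕ) → Set Ω := fun x =>
      match x with
      | Sum.inl _ => Set.univ
      | Sum.inr (Sum.inl i) => ε₁ i ⁻¹' Set.Iic ((t - f i z) / σ i)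
      | Sum.inr (Sum.inr j) => ε₂ j ⁻¹' Set.Iic ((t - g j z) / σt j) with hE'
    have hWpre : W ⁻¹' ((Set.univ.pi fun i : Fin m => Set.Iic ((t - f i z) / σ i)) ×ˢ
        (Set.univ.pi fun j : Fin k => Set.Iic ((t - g j z) / σt j))) = ⋂ x ∈ (A ∪ B), E' x := by
      ext ω
      simp only [Set.mem_preimage, Set.mem_prod, Set.mem_pi, Set.mem_univ, true_implies,
        Set.mem_iInter, Finset.mem_union, hA, hB, Finset.mem_image, Finset.mem_range]
      constructor
      · rintro ⟨h1, h2⟩ x hx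
        rcases hx with ⟨b, hb, rfl⟩ | ⟨b, hb, rfl⟩
        · exact h1 ⟨b, hb⟩
        · exact h2 ⟨b, hb⟩
      · intro h
        constructor
        · intro i
          exact h (Sum.inr (Sum.inl i.val)) (Or.inl ⟨i.val, i.isLt, rfl⟩)
        · intro j
          exact h (Sum.inr (Sum.inr j.val)) (Or.inr ⟨j.val, j.isLt, rfl⟩)
    rw [hWpre]
    have hprod := hindep.meas_biInter (S := A ∪ B) (s := E') ?side
    · rw [hprod]
      have hdisjAB : Disjoint A B := by
        simp [Finset.disjoint_left, hA, hB]
      rw [Finset.prod_union hdisjAB]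
      have hinj1 : ∀ x ∈ Finset.range m, ∀ y ∈ Finset.range m,
          (Sum.inr (Sum.inl x) : Unit ⊕ ℕ ⊕ ℕ) = Sum.inr (Sum.inl y) → x = y := by
        intro x _ y _ h; simpa using h
      have hinj2 : ∀ x ∈ Finset.range k, ∀ y ∈ Finset.range k,
          (Sum.inr (Sum.inr x) : Unit ⊕ ℕ ⊕ ℕ) = Sum.inr (Sum.inr y) → x = y := by
        intro x _ y _ h; simpa using h
      rw [hA, hB, Finset.prod_image hinj1, Finset.prod_image hinj2]
      congr 1
      · apply Finset.prod_congr rfl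
        intro i _
        exact (hid₁ i).measure_mem_eq measurableSet_Iic
      · apply Finset.prod_congr rfl
        intro j _
        exact (hid₂ j).measure_mem_eq measurableSet_Iic
    · intro x hx
      rcases x with u | i | j
      · exact ⟨Set.univ, MeasurableSet.univ, by simp [hE']⟩
      · exact ⟨(Set.Iic ((t - f i z) / σ i) : Set ℝ),
          (measurableSet_Iic : MeasurableSet (Set.Iic ((t - f i z) / σ i))), rfl⟩
      · exact ⟨(Set.Iic ((t - g j z) / σt j) : Set ℝ),
          (measurableSet_Iic : MeasurableSet (Set.Iic ((t - g j z) / σt j))), rfl⟩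
  -- main identity in ENNReal
  have hmain : P {ω | Qmax X₁ X₂ m k ω ≤ t} =
      ∫⁻ ω, (∏ i ∈ Finset.range m, F₁ ((t - f i (Z ω)) / σ i)) *
        (∏ j ∈ Finset.range k, F₂ ((t - g j (Z ω)) / σt j)) ∂P := by
    rw [hev, ← Measure.map_apply (hZm.prodMk hWm) hEm,
      (indepFun_iff_map_prod_eq_prod_map_map hZm.aemeasurable hWm.aemeasurable).mp hZW,
      Measure.prod_apply hEm]
    have hslice : ∀ z, Prod.mk z ⁻¹' E =
        ((Set.univ.pi fun i : Fin m => Set.Iic ((t - f i z) / σ i)) ×ˢ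
          (Set.univ.pi fun j : Fin k => Set.Iic ((t - g j z) / σt j))) := by
      intro z
      ext w
      simp [hE, Set.mem_pi, Prod.le_def, Pi.le_def]
    calc ∫⁻ z, (P.map W) (Prod.mk z ⁻¹' E) ∂(P.map Z)
        = ∫⁻ z, (∏ i ∈ Finset.range m, F₁ ((t - f i z) / σ i)) *
            (∏ j ∈ Finset.range k, F₂ ((t - g j z) / σt j)) ∂(P.map Z) := by
          apply lintegral_congr
          intro z
          rw [hslice z, hrect z]
      _ = ∫⁻ ω, (∏ i ∈ Finset.range m, F₁ ((t - f i (Z ω)) / σ i)) *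
            (∏ j ∈ Finset.range k, F₂ ((t - g j (Z ω)) / σt j)) ∂P := by
          apply lintegral_map ?_ hZm
          apply Measurable.mul
          · apply Finset.measurable_prod
            intro i _
            exact hF₁meas.comp ((measurable_const.sub (hfm i)).div_const _)
          · apply Finset.measurable_prod
            intro j _
            exact hF₂meas.comp ((measurable_const.sub (hgm j)).div_const _)
  -- convert to a Bochner integral
  have hGm : Measurable (fun ω => (∏ i ∈ Finset.range m, F₁ ((t - f i (Z ω)) / σ i)) *
      (∏ j ∈ Finset.range k, F₂ ((t - g j (Z ω)) / σt j))) := by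
    apply Measurable.mul
    · apply Finset.measurable_prod
      intro i _
      exact (hF₁meas.comp ((measurable_const.sub (hfm i)).div_const _)).comp hZm
    · apply Finset.measurable_prod
      intro j _
      exact (hF₂meas.comp ((measurable_const.sub (hgm j)).div_const _)).comp hZm
  have hGlt : ∀ ω, (∏ i ∈ Finset.range m, F₁ ((t - f i (Z ω)) / σ i)) *
      (∏ j ∈ Finset.range k, F₂ ((t - g j (Z ω)) / σt j)) < ⊤ := by
    intro ω
    have h1 : (∏ i ∈ Finset.range m, F₁ ((t - f i (Z ω)) / σ i)) ≤ 1 :=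
      Finset.prod_le_one (fun _ _ => by simp) (fun i _ => prob_le_one)
    have h2 : (∏ j ∈ Finset.range k, F₂ ((t - g j (Z ω)) / σt j)) ≤ 1 :=
      Finset.prod_le_one (fun _ _ => by simp) (fun j _ => prob_le_one)
    exact lt_of_le_of_lt (le_trans (mul_le_mul' h1 h2) (le_of_eq (one_mul 1))) ENNReal.one_lt_top
  rw [hmain, ← integral_toReal hGm.aemeasurable (Filter.Eventually.of_forall hGlt)]
  apply integral_congr_ae
  apply Filter.Eventually.of_forall
  intro ω
  simp only [ENNReal.toReal_mul, ENNReal.toReal_prod]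
  rfl


/-- Prop. 2, Case 3, second subcase: `α₁ > α₂`, `p₁/p₂ → ∞`, `a₂/a₁ → a > 0` imply `P(Q ≤ a₂ x) → Ψ_{α₁}(a x)·Ψ_{α₂}(x)` for all `x > 0`. -/
theorem prop2_case3_sub2
    {Ω : Type*} [MeasurableSpace Ω] (P : Measure Ω) [IsProbabilityMeasure P]
    (d : ℕ) (Z : Ω → Fin d → ℝ) (hZm : Measurable Z)
    (f g : ℕ → (Fin d → ℝ) → ℝ) (hfm : ∀ i, Measurable (f i)) (hgm : ∀ j, Measurable (g j))
    (hfbdd : ∀ᵐ ω ∂P, ∃ M : ℝ, ∀ i, |f i (Z ω)| ≤ M)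
    (hgbdd : ∀ᵐ ω ∂P, ∃ M : ℝ, ∀ j, |g j (Z ω)| ≤ M)
    (C₁ C₂ : ℝ) (hC₁ : 0 < C₁) (hC₁₂ : C₁ ≤ C₂)
    (σ σt : ℕ → ℝ) (hσ : ∀ i, σ i ∈ Set.Icc C₁ C₂) (hσt : ∀ j, σt j ∈ Set.Icc C₁ C₂)
    (α₁ α₂ : ℝ) (hα₁ : 0 < α₁) (hα₂ : 0 < α₂)
    (ε₁ ε₂ : ℕ → Ω → ℝ) (hε₁m : ∀ i, Measurable (ε₁ i)) (hε₂m : ∀ j, Measurable (ε₂ j))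
    (hid₁ : ∀ i, IdentDistrib (ε₁ i) (ε₁ 0) P P)
    (hid₂ : ∀ j, IdentDistrib (ε₂ j) (ε₂ 0) P P)
    (hindep : iIndepFun (m := fun i => mixCodomMeasurableSpace d i) (mixFun Z ε₁ ε₂) P)
    (htail₁ : Tendsto (fun x : ℝ => x ^ α₁ * (P {ω | x < ε₁ 0 ω}).toReal) atTop (nhds 1))
    (htail₂ : Tendsto (fun x : ℝ => x ^ α₂ * (P {ω | x < ε₂ 0 ω}).toReal) atTop (nhds 1))
    (X₁ X₂ : ℕ → Ω → ℝ)
    (hX₁ : ∀ i ω, X₁ i ω = f i (Z ω) + σ i * ε₁ i ω)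
    (hX₂ : ∀ j ω, X₂ j ω = g j (Z ω) + σt j * ε₂ j ω)
    (p₁ p₂ : ℕ → ℕ) (hp₁pos : ∀ n, 0 < p₁ n) (hp₂pos : ∀ n, 0 < p₂ n)
    (hp₁ : Tendsto (fun n => (p₁ n : ℝ)) atTop atTop)
    (hp₂ : Tendsto (fun n => (p₂ n : ℝ)) atTop atTop)
    (hα : α₂ < α₁)
    (hratio : Tendsto (fun n => (p₁ n : ℝ) / (p₂ n : ℝ)) atTop atTop)
    (a : ℝ) (ha : 0 < a)
    (hnorm : Tendsto (fun n => normConst σt α₂ (p₂ n) / normConst σ α₁ (p₁ n)) atTop (nhds a)) :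
    ∀ x : ℝ, 0 < x →
      Tendsto (fun n => (P {ω | Qmax X₁ X₂ (p₁ n) (p₂ n) ω ≤ normConst σt α₂ (p₂ n) * x}).toReal) atTop
        (nhds (frechetCDF α₁ (a * x) * frechetCDF α₂ x)) := by
  intro x hx
  have hσp : ∀ i, 0 < σ i := fun i => lt_of_lt_of_le hC₁ (hσ i).1
  have hσtp : ∀ j, 0 < σt j := fun j => lt_of_lt_of_le hC₁ (hσt j).1
  set t : ℕ → ℝ := fun n => normConst σt α₂ (p₂ n) * x with htdef
  have hA1pos : ∀ n, 0 < normConst σ α₁ (p₁ n) :=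
    fun n => normConst_pos hα₁ hC₁ (fun i => (hσ i).1) (hp₁pos n)
  have hA2pos : ∀ n, 0 < normConst σt α₂ (p₂ n) :=
    fun n => normConst_pos hα₂ hC₁ (fun j => (hσt j).1) (hp₂pos n)
  have htpos : ∀ n, 0 < t n := fun n => mul_pos (hA2pos n) hx
  have hA2top : Tendsto (fun n => normConst σt α₂ (p₂ n)) atTop atTop := by
    apply tendsto_atTop_mono (fun n => normConst_lb hα₂ hC₁ (fun j => (hσt j).1) (p₂ n))
    exact Tendsto.atTop_mul_const hC₁ ((tendsto_rpow_atTop (by positivity)).comp hp₂)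
  have httop : Tendsto t atTop atTop := hA2top.atTop_mul_const hx
  have hsum₁ : Tendsto (fun n => (∑ i ∈ Finset.range (p₁ n), σ i ^ α₁) / t n ^ α₁) atTop
      (nhds ((a * x) ^ (-α₁))) := by
    apply aux_sum_ratio hα₁ (mul_pos ha hx) σ (fun i => (hσp i).le) p₁ t hA1pos htpos
    have h := hnorm.mul_const x
    apply h.congr
    intro n
    rw [div_mul_eq_mul_div]
  have hsum₂ : Tendsto (fun n => (∑ j ∈ Finset.range (p₂ n), σt j ^ α₂) / t n ^ α₂) atTop
      (nhds (x ^ (-α₂))) := by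
    apply aux_sum_ratio hα₂ hx σt (fun j => (hσtp j).le) p₂ t hA2pos htpos
    apply tendsto_const_nhds.congr
    intro n
    show x = normConst σt α₂ (p₂ n) * x / normConst σt α₂ (p₂ n)
    rw [mul_comm, mul_div_assoc, div_self (hA2pos n).ne', mul_one]
  set s₁ : ℝ → ℝ := fun u => (P {ω | u < ε₁ 0 ω}).toReal with hs₁def
  set s₂ : ℝ → ℝ := fun u => (P {ω | u < ε₂ 0 ω}).toReal with hs₂def
  have hcdf₁ : ∀ c : ℝ, (P {ω' | ε₁ 0 ω' ≤ c}).toReal = 1 - s₁ c := by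
    intro c
    have he : {ω | c < ε₁ 0 ω} = {ω' | ε₁ 0 ω' ≤ c}ᶜ := by
      ext ω; simp [not_le]
    have hms : MeasurableSet {ω' | ε₁ 0 ω' ≤ c} := measurableSet_le (hε₁m 0) measurable_const
    have h2 : P {ω | c < ε₁ 0 ω} = 1 - P {ω' | ε₁ 0 ω' ≤ c} := by
      rw [he, prob_compl_eq_one_sub hms]
    have h3 : s₁ c = 1 - (P {ω' | ε₁ 0 ω' ≤ c}).toReal := by
      rw [hs₁def]
      simp only
      rw [h2, ENNReal.toReal_sub_of_le prob_le_one ENNReal.one_ne_top, ENNReal.toReal_one]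
    linarith
  have hcdf₂ : ∀ c : ℝ, (P {ω' | ε₂ 0 ω' ≤ c}).toReal = 1 - s₂ c := by
    intro c
    have he : {ω | c < ε₂ 0 ω} = {ω' | ε₂ 0 ω' ≤ c}ᶜ := by
      ext ω; simp [not_le]
    have hms : MeasurableSet {ω' | ε₂ 0 ω' ≤ c} := measurableSet_le (hε₂m 0) measurable_const
    have h2 : P {ω | c < ε₂ 0 ω} = 1 - P {ω' | ε₂ 0 ω' ≤ c} := by
      rw [he, prob_compl_eq_one_sub hms]
    have h3 : s₂ c = 1 - (P {ω' | ε₂ 0 ω' ≤ c}).toReal := by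
      rw [hs₂def]
      simp only
      rw [h2, ENNReal.toReal_sub_of_le prob_le_one ENNReal.one_ne_top, ENNReal.toReal_one]
    linarith
  have heq : ∀ n, (P {ω | Qmax X₁ X₂ (p₁ n) (p₂ n) ω ≤ t n}).toReal =
      ∫ ω, (∏ i ∈ Finset.range (p₁ n),
          (P {ω' | ε₁ 0 ω' ≤ (t n - f i (Z ω)) / σ i}).toReal) *
        (∏ j ∈ Finset.range (p₂ n),
          (P {ω' | ε₂ 0 ω' ≤ (t n - g j (Z ω)) / σt j}).toReal) ∂P :=
    fun n => aux_measure_eq P Z hZm f g hfm hgm σ σt hσp hσtp ε₁ ε₂ hε₁m hε₂m hid₁ hid₂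
      hindep X₁ X₂ hX₁ hX₂ (p₁ n) (p₂ n) (hp₁pos n) (hp₂pos n) (t n)
  have hF₁r_meas : Measurable (fun c : ℝ => (P {ω' | ε₁ 0 ω' ≤ c}).toReal) := by
    apply Monotone.measurable
    intro c c' hcc
    exact ENNReal.toReal_mono (measure_ne_top P _)
      (measure_mono fun ω' (h : ε₁ 0 ω' ≤ c) => le_trans h hcc)
  have hF₂r_meas : Measurable (fun c : ℝ => (P {ω' | ε₂ 0 ω' ≤ c}).toReal) := by
    apply Monotone.measurable
    intro c c' hcc
    exact ENNReal.toReal_mono (measure_ne_top P _)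
      (measure_mono fun ω' (h : ε₂ 0 ω' ≤ c) => le_trans h hcc)
  have hprob01 : ∀ A : Set Ω, (P A).toReal ∈ Set.Icc (0:ℝ) 1 := by
    intro A
    constructor
    · exact ENNReal.toReal_nonneg
    · have := ENNReal.toReal_mono ENNReal.one_ne_top (prob_le_one (μ := P) (s := A))
      simpa using this
  have hmain : Tendsto (fun n =>
      ∫ ω, (∏ i ∈ Finset.range (p₁ n),
          (P {ω' | ε₁ 0 ω' ≤ (t n - f i (Z ω)) / σ i}).toReal) *
        (∏ j ∈ Finset.range (p₂ n),
          (P {ω' | ε₂ 0 ω' ≤ (t n - g j (Z ω)) / σt j}).toReal) ∂P) atTop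
      (nhds (frechetCDF α₁ (a * x) * frechetCDF α₂ x)) := by
    have hDCT := tendsto_integral_of_dominated_convergence (μ := P)
      (F := fun n ω => (∏ i ∈ Finset.range (p₁ n),
          (P {ω' | ε₁ 0 ω' ≤ (t n - f i (Z ω)) / σ i}).toReal) *
        (∏ j ∈ Finset.range (p₂ n),
          (P {ω' | ε₂ 0 ω' ≤ (t n - g j (Z ω)) / σt j}).toReal))
      (f := fun _ => frechetCDF α₁ (a * x) * frechetCDF α₂ x)
      (bound := fun _ => (1:ℝ))
      ?_ (integrable_const 1) ?_ ?_
    · have h1 : ∫ (_ : Ω), frechetCDF α₁ (a * x) * frechetCDF α₂ x ∂P =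
          frechetCDF α₁ (a * x) * frechetCDF α₂ x := by
        simp [integral_const]
      rwa [h1] at hDCT
    · intro n
      apply Measurable.aestronglyMeasurable
      apply Measurable.mul
      · apply Finset.measurable_prod
        intro i _
        exact hF₁r_meas.comp ((measurable_const.sub ((hfm i).comp hZm)).div_const _)
      · apply Finset.measurable_prod
        intro j _
        exact hF₂r_meas.comp ((measurable_const.sub ((hgm j).comp hZm)).div_const _)
    · intro n
      apply Filter.Eventually.of_forall
      intro ω
      have h1 : ∀ i ∈ Finset.range (p₁ n),
          (P {ω' | ε₁ 0 ω' ≤ (t n - f i (Z ω)) / σ i}).toReal ∈ Set.Icc (0:ℝ) 1 :=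
        fun i _ => hprob01 _
      have h2 : ∀ j ∈ Finset.range (p₂ n),
          (P {ω' | ε₂ 0 ω' ≤ (t n - g j (Z ω)) / σt j}).toReal ∈ Set.Icc (0:ℝ) 1 :=
        fun j _ => hprob01 _
      have hp1 : (0:ℝ) ≤ ∏ i ∈ Finset.range (p₁ n),
          (P {ω' | ε₁ 0 ω' ≤ (t n - f i (Z ω)) / σ i}).toReal :=
        Finset.prod_nonneg fun i hi => (h1 i hi).1
      have hp1' : (∏ i ∈ Finset.range (p₁ n),
          (P {ω' | ε₁ 0 ω' ≤ (t n - f i (Z ω)) / σ i}).toReal) ≤ 1 :=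
        Finset.prod_le_one (fun i hi => (h1 i hi).1) (fun i hi => (h1 i hi).2)
      have hp2 : (0:ℝ) ≤ ∏ j ∈ Finset.range (p₂ n),
          (P {ω' | ε₂ 0 ω' ≤ (t n - g j (Z ω)) / σt j}).toReal :=
        Finset.prod_nonneg fun j hj => (h2 j hj).1
      have hp2' : (∏ j ∈ Finset.range (p₂ n),
          (P {ω' | ε₂ 0 ω' ≤ (t n - g j (Z ω)) / σt j}).toReal) ≤ 1 :=
        Finset.prod_le_one (fun j hj => (h2 j hj).1) (fun j hj => (h2 j hj).2)
      rw [Real.norm_eq_abs, abs_of_nonneg (mul_nonneg hp1 hp2)]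
      nlinarith
    · filter_upwards [hfbdd, hgbdd] with ω hMf hMg
      obtain ⟨M₁, hM₁⟩ := hMf
      obtain ⟨M₂, hM₂⟩ := hMg
      set M : ℝ := max 0 (max M₁ M₂) with hMdef
      have hM0 : (0:ℝ) ≤ M := le_max_left _ _
      have hprod₁ := aux_prod_tendsto hα₁ hC₁ hC₁₂ hM0
        (Real.rpow_nonneg (mul_pos ha hx).le (-α₁)) s₁ (fun u => ENNReal.toReal_nonneg)
        htail₁ σ (fun i => f i (Z ω)) (fun i => (hσ i).1) (fun i => (hσ i).2)
        (fun i => le_trans (hM₁ i) (le_trans (le_trans (le_max_left _ _) le_rfl)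
          (le_max_right _ _))) t httop p₁ hsum₁
      have hprod₂ := aux_prod_tendsto hα₂ hC₁ hC₁₂ hM0
        (Real.rpow_nonneg hx.le (-α₂)) s₂ (fun u => ENNReal.toReal_nonneg)
        htail₂ σt (fun j => g j (Z ω)) (fun j => (hσt j).1) (fun j => (hσt j).2)
        (fun j => le_trans (hM₂ j) (le_trans (le_max_right M₁ M₂)
          (le_max_right _ _))) t httop p₂ hsum₂
      have hmul := hprod₁.mul hprod₂
      have hval : Real.exp (-(a * x) ^ (-α₁)) * Real.exp (-x ^ (-α₂)) =
          frechetCDF α₁ (a * x) * frechetCDF α₂ x := by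
        rw [frechetCDF, frechetCDF, if_pos (mul_pos ha hx), if_pos hx]
      rw [← hval]
      apply hmul.congr
      intro n
      congr 1
      · exact (Finset.prod_congr rfl fun i _ => (hcdf₁ _).symm)
      · exact (Finset.prod_congr rfl fun j _ => (hcdf₂ _).symm)
  exact hmain.congr fun n => (heq n).symm
end
end
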